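/- arXiv:2312.00618 — 7 statements merged into one kernel-verified Lean document; each statement's English description precedes it below -/
import Mathlib

section
/- Let τ₀ ∈ ℝ, let Σ : [τ₀,∞) → Matrix (Fin 3) (Fin 3) ℝ be continuous with Σ(τ) symmetric for each τ, let R : [τ₀,∞) → Matrix (Fin 3) (Fin 3) ℝ be continuous with R(τ) antisymmetric for each τ, and let P : [τ₀,∞) → (Fin 3 → ℝ) be continuously differentiable with P_a'(τ) = −∑_c P_c(τ)·(Σ_{ca}(τ) + δ_{ca} + R_{ca}(τ)) for all a and all τ ≥ τ₀. Then for all τ ≥ τ₀: ∑_a P_a(τ)² ≤ (∑_a P_a(τ₀)²) · exp( ∫_{τ₀}^{τ} (−2 + 2√(∑_{a,b} Σ_{ab}(s)²)) ds ). -/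
open Real Set

/-- Estimate for the squared characteristic momenta in dimensionless time:
if `P_a' = -∑_c P_c (Σ_{ca} + δ_{ca} + R_{ca})` with `Σ` symmetric (the
Hubble-normalised shear) and `R` antisymmetric, then
`∑ P_a(τ)² ≤ ∑ P_a(τ₀)² · exp ∫_{τ₀}^τ (-2 + 2√(Σ_{ab}Σ^{ab}))`. -/
theorem squared_momenta_estimate
    (τ₀ : ℝ)
    (Sig R : ℝ → Matrix (Fin 3) (Fin 3) ℝ)
    (hSig_cont : ContinuousOn Sig (Ici τ₀))
    (hR_cont : ContinuousOn R (Ici τ₀))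
    (hSig_symm : ∀ τ ∈ Ici τ₀, (Sig τ).IsSymm)
    (hR_antisymm : ∀ τ ∈ Ici τ₀, (R τ).transpose = -(R τ))
    (P : ℝ → Fin 3 → ℝ)
    (hP : ∀ τ ∈ Ici τ₀, ∀ a, HasDerivAt (fun s => P s a)
      (-(∑ c, P τ c *
        (Sig τ c a + (if c = a then (1 : ℝ) else 0) + R τ c a))) τ) :
    ∀ τ ∈ Ici τ₀,
      ∑ a, (P τ a) ^ 2 ≤
        (∑ a, (P τ₀ a) ^ 2) *
          Real.exp (∫ s in τ₀..τ,
            (-2 + 2 * Real.sqrt (∑ a, ∑ b, (Sig s a b) ^ 2))) := by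
  -- abbreviations
  set n : ℝ → ℝ := fun s => ∑ a, (P s a) ^ 2 with hn_def
  set M : ℝ → ℝ := fun s => ∑ a, ∑ b, (Sig s a b) ^ 2 with hM_def
  set g : ℝ → ℝ := fun s => -2 + 2 * Real.sqrt (M s) with hg_def
  set Q : ℝ → ℝ := fun s => ∑ a, ∑ c, P s c * P s a * Sig s c a with hQ_def
  set G : ℝ → ℝ := fun u => ∫ s in τ₀..u, g s with hG_def
  have hn_nonneg : ∀ x, 0 ≤ n x := fun x =>
    Finset.sum_nonneg fun a _ => sq_nonneg _
  have hM_nonneg : ∀ x, 0 ≤ M x := fun x =>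
    Finset.sum_nonneg fun a _ => Finset.sum_nonneg fun b _ => sq_nonneg _
  -- continuity of g on Ici τ₀
  have hentry : ∀ a b : Fin 3, ContinuousOn (fun s => Sig s a b) (Ici τ₀) := by
    intro a b x hx
    exact (((continuous_apply b).comp (continuous_apply a)).continuousAt).comp_continuousWithinAt
      (hSig_cont x hx)
  have hM_cont : ContinuousOn M (Ici τ₀) := by
    apply continuousOn_finset_sum
    intro a _
    apply continuousOn_finset_sum
    intro b _
    exact (hentry a b).pow 2
  have hg_cont : ContinuousOn g (Ici τ₀) := by
    apply ContinuousOn.add continuousOn_const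
    exact ContinuousOn.mul continuousOn_const (Real.continuous_sqrt.comp_continuousOn hM_cont)
  -- interval integrability of g
  have hgint : ∀ x, τ₀ ≤ x → IntervalIntegrable g MeasureTheory.volume τ₀ x := by
    intro x hx
    apply ContinuousOn.intervalIntegrable
    apply hg_cont.mono
    rw [uIcc_of_le hx]
    exact fun y hy => hy.1
  -- derivative of n
  have hn_deriv : ∀ x ∈ Ici τ₀, HasDerivAt n (-2 * n x - 2 * Q x) x := by
    intro x hx
    have h := HasDerivAt.sum (u := (Finset.univ : Finset (Fin 3)))
      (fun a _ => ((hP x hx a).pow 2))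
    have hR' : ∀ a c : Fin 3, R x a c + R x c a = 0 := by
      intro a c
      have h1 := congrFun (congrFun (hR_antisymm x hx) c) a
      simp [Matrix.transpose_apply] at h1
      linarith
    have key : (∑ a, ((2 : ℕ) : ℝ) * P x a ^ (2 - 1) *
        (-(∑ c, P x c * (Sig x c a + (if c = a then (1:ℝ) else 0) + R x c a))))
        = -2 * n x - 2 * Q x := by
      simp only [hn_def, hQ_def, Fin.sum_univ_three]
      norm_num [Fin.ext_iff]
      linear_combination
        (-(P x 0)^2) * hR' 0 0 + (-(P x 1)^2) * hR' 1 1 + (-(P x 2)^2) * hR' 2 2 +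
        (-2 * P x 0 * P x 1) * hR' 0 1 + (-2 * P x 0 * P x 2) * hR' 0 2 +
        (-2 * P x 1 * P x 2) * hR' 1 2
    rw [key] at h
    exact h
  -- bound on Q by Cauchy-Schwarz
  have hQbound : ∀ x ∈ Ici τ₀, -Q x ≤ n x * Real.sqrt (M x) := by
    intro x hx
    set w : Fin 3 → ℝ := fun a => ∑ c, P x c * Sig x c a with hw_def
    have hQw : Q x = ∑ a, w a * P x a := by
      simp only [hQ_def, hw_def]
      refine Finset.sum_congr rfl fun a _ => ?_
      rw [Finset.sum_mul]
      refine Finset.sum_congr rfl fun c _ => ?_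
      ring
    have h1 : (Q x) ^ 2 ≤ (∑ a, (w a) ^ 2) * n x := by
      rw [hQw, hn_def]
      exact Finset.sum_mul_sq_le_sq_mul_sq _ _ _
    have h2 : (∑ a, (w a) ^ 2) ≤ n x * M x := by
      have h2' : ∀ a : Fin 3, (w a) ^ 2 ≤ n x * (∑ c, (Sig x c a) ^ 2) := by
        intro a
        exact Finset.sum_mul_sq_le_sq_mul_sq _ _ _
      calc (∑ a, (w a) ^ 2) ≤ ∑ a, n x * (∑ c, (Sig x c a) ^ 2) :=
            Finset.sum_le_sum fun a _ => h2' a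
        _ = n x * ∑ a, ∑ c, (Sig x c a) ^ 2 := by rw [Finset.mul_sum]
        _ = n x * M x := by rw [hM_def]; rw [Finset.sum_comm]
    have hsq : (Q x) ^ 2 ≤ (n x * Real.sqrt (M x)) ^ 2 := by
      have h3 : (Q x) ^ 2 ≤ n x * M x * n x :=
        h1.trans (mul_le_mul_of_nonneg_right h2 (hn_nonneg x))
      rw [mul_pow, Real.sq_sqrt (hM_nonneg x)]
      nlinarith [hn_nonneg x, hM_nonneg x]
    calc -Q x ≤ |Q x| := neg_le_abs _
      _ = Real.sqrt ((Q x) ^ 2) := (Real.sqrt_sq_eq_abs _).symm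
      _ ≤ Real.sqrt ((n x * Real.sqrt (M x)) ^ 2) := Real.sqrt_le_sqrt hsq
      _ = |n x * Real.sqrt (M x)| := Real.sqrt_sq_eq_abs _
      _ = n x * Real.sqrt (M x) :=
          abs_of_nonneg (mul_nonneg (hn_nonneg x) (Real.sqrt_nonneg _))
  -- derivative bound
  have hderiv_le : ∀ x ∈ Ici τ₀, -2 * n x - 2 * Q x ≤ g x * n x := by
    intro x hx
    have := hQbound x hx
    simp only [hg_def]
    nlinarith [this]
  -- the comparison function v
  set v : ℝ → ℝ := fun s => n s * Real.exp (-(G s)) with hv_def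
  -- continuity of G on Ici τ₀
  have hG_cont : ContinuousOn G (Ici τ₀) := by
    intro x hx
    have hx1 : τ₀ ≤ x + 1 := le_trans hx (by linarith)
    have hcc : ContinuousOn G (uIcc τ₀ (x + 1)) :=
      intervalIntegral.continuousOn_primitive_interval' (hgint (x + 1) hx1) left_mem_uIcc
    rw [uIcc_of_le hx1] at hcc
    have hmem : Icc τ₀ (x + 1) ∈ nhdsWithin x (Ici τ₀) := by
      apply mem_nhdsWithin.2
      exact ⟨Iio (x + 1), isOpen_Iio, by simpa using lt_add_one x,
        fun y hy => ⟨hy.2, le_of_lt hy.1⟩⟩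
    exact (hcc x ⟨hx, by linarith [lt_add_one x]⟩).mono_of_mem_nhdsWithin hmem
  -- derivative of G at interior points
  have hG_deriv : ∀ x ∈ Ioi τ₀, HasDerivAt G (g x) x := by
    intro x hx
    apply intervalIntegral.integral_hasDerivAt_right (hgint x (le_of_lt hx))
    · exact (hg_cont.mono (Ioi_subset_Ici le_rfl)).stronglyMeasurableAtFilter isOpen_Ioi x hx
    · have : Ici τ₀ ∈ nhds x := Ici_mem_nhds hx
      exact (hg_cont x (mem_Ici.2 (le_of_lt hx))).continuousAt this
  -- v is antitone on Ici τ₀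
  have hv_deriv : ∀ x ∈ Ioi τ₀, HasDerivAt v
      ((-2 * n x - 2 * Q x) * Real.exp (-(G x)) +
        n x * (Real.exp (-(G x)) * -(g x))) x := by
    intro x hx
    exact (hn_deriv x (mem_Ici.2 (le_of_lt hx))).mul ((hG_deriv x hx).neg.exp)
  have hanti : AntitoneOn v (Ici τ₀) := by
    apply antitoneOn_of_deriv_nonpos (convex_Ici τ₀)
    · exact fun x hx => ((hn_deriv x hx).continuousAt.continuousWithinAt.mul
        (((hG_cont x hx).neg).rexp))
    · rw [interior_Ici]
      exact fun x hx => ((hv_deriv x hx).differentiableAt).differentiableWithinAt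
    · rw [interior_Ici]
      intro x hx
      rw [(hv_deriv x hx).deriv]
      have h1 : -2 * n x - 2 * Q x ≤ g x * n x := hderiv_le x (mem_Ici.2 (le_of_lt hx))
      have h2 : (0 : ℝ) < Real.exp (-(G x)) := Real.exp_pos _
      nlinarith [h1, h2, hn_nonneg x]
  -- conclude
  intro τ hτ
  have hv_le : v τ ≤ v τ₀ := hanti self_mem_Ici hτ hτ
  have hv0 : v τ₀ = n τ₀ := by
    simp [hv_def, hG_def, intervalIntegral.integral_same]
  have hkey : n τ * Real.exp (-(G τ)) ≤ n τ₀ := by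
    rw [← hv0]; exact hv_le
  have hfinal : n τ ≤ n τ₀ * Real.exp (G τ) := by
    have h3 := mul_le_mul_of_nonneg_right hkey (le_of_lt (Real.exp_pos (G τ)))
    rwa [mul_assoc, ← Real.exp_add, neg_add_cancel, Real.exp_zero, mul_one] at h3
  exact hfinal
end

section
/- Consider the Hubble-normalised Bianchi I Einstein–Vlasov–magnetic ODE system (see context). There exist ε₀ > 0 and C > 0 such that for every ε ∈ (0, ε₀], if |B(τ₀)| ≤ ε, |Σ₂₂(τ₀)| ≤ ε, |Σ₃₃(τ₀)| ≤ ε, |Σ₁₂(τ₀)| ≤ ε, |Σ₁₃(τ₀)| ≤ ε, |Σ₂₃(τ₀)| ≤ ε and P̂(τ₀) ≤ ε, then for all τ ≥ τ₀: |B(τ)| ≤ Cε·e^{−(τ−τ₀)/2}; |Σ₁₂(τ)| ≤ Cε·e^{−3(τ−τ₀)/2}; |Σ₁₃(τ)| ≤ Cε·e^{−3(τ−τ₀)/2}; |Σ₂₃(τ)| ≤ Cε·e^{−3(τ−τ₀)/2}; |Σ₂₂(τ) − Σ₃₃(τ)| ≤ Cε·e^{−3(τ−τ₀)/2}; |Σ₂₂(τ)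 + Σ₃₃(τ)| ≤ Cε·e^{−(τ−τ₀)}; and P̂(τ) ≤ Cε·e^{−2(τ−τ₀)}. -/
open Real Set

/-- The Hubble-normalised shear scalar `F = Σ_{ab}Σ^{ab}`, with
`Σ₁₁ = -Σ₂₂ - Σ₃₃`. -/
noncomputable def shearScalar (S22 S33 S12 S13 S23 : ℝ → ℝ) (τ : ℝ) : ℝ :=
  (-(S22 τ) - S33 τ) ^ 2 + (S22 τ) ^ 2 + (S33 τ) ^ 2
    + 2 * ((S12 τ) ^ 2 + (S13 τ) ^ 2 + (S23 τ) ^ 2)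

/-- The deceleration parameter `q = 1/2 + F/4 + (s + B²/2)/6`. -/
noncomputable def decelParam (B S22 S33 S12 S13 S23 s : ℝ → ℝ) (τ : ℝ) : ℝ :=
  1 / 2 + shearScalar S22 S33 S12 S13 S23 τ / 4 + (s τ + (B τ) ^ 2 / 2) / 6

lemma barrier (f f' : ℝ → ℝ) (a c : ℝ)
    (hf : ∀ τ ∈ Ici a, HasDerivAt f (f' τ) τ)
    (h0 : f a ≤ c)
    (hc : ∀ τ ∈ Ici a, f τ = c → f' τ < 0) :
    ∀ τ ∈ Ici a, f τ ≤ c := by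
  intro τ hτ
  have := image_le_of_deriv_right_lt_deriv_boundary (f := f) (f' := f') (a := a) (b := τ)
    (fun x hx => (hf x hx.1).continuousAt.continuousWithinAt)
    (fun x hx => (hf x hx.1).hasDerivWithinAt)
    (B := fun _ => c) (B' := fun _ => 0) h0 (fun x => hasDerivAt_const x c)
    (fun x hx hfx => hc x hx.1 hfx)
  exact this (right_mem_Icc.2 hτ)

lemma mono_le (f f' : ℝ → ℝ) (a : ℝ)
    (hf : ∀ τ ∈ Ici a, HasDerivAt f (f' τ) τ)
    (h : ∀ τ ∈ Ici a, f' τ ≤ 0) :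
    ∀ τ ∈ Ici a, f τ ≤ f a := by
  intro τ hτ
  have hcont : ContinuousOn f (Ici a) := fun x hx => (hf x hx).continuousAt.continuousWithinAt
  have hdiff : DifferentiableOn ℝ f (interior (Ici a)) := by
    rw [interior_Ici]
    exact fun x hx => ((hf x (mem_Ici.2 (le_of_lt hx))).differentiableAt).differentiableWithinAt
  have hd : ∀ x ∈ interior (Ici a), deriv f x ≤ 0 := by
    rw [interior_Ici]; intro x hx; rw [(hf x (mem_Ici.2 (le_of_lt hx))).deriv]; exact h x (mem_Ici.2 (le_of_lt hx))
  exact antitoneOn_of_deriv_nonpos (convex_Ici a) hcont hdiff hd self_mem_Ici hτ hτ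

lemma wt_hasDeriv (a k c τ : ℝ) :
    HasDerivAt (fun x => exp (k*(x-a) - 4*c*(1 - exp (-(x-a)/4))))
      ((k - c * exp (-(τ-a)/4)) * exp (k*(τ-a) - 4*c*(1 - exp (-(τ-a)/4)))) τ := by
  have h1 : HasDerivAt (fun x : ℝ => -(x-a)/4) (-1/4 : ℝ) τ := by
    simpa using (((hasDerivAt_id τ).sub_const a).neg.div_const 4)
  have h2 : HasDerivAt (fun x : ℝ => exp (-(x-a)/4)) (exp (-(τ-a)/4) * (-1/4)) τ := h1.exp
  have h4 : HasDerivAt (fun x : ℝ => k*(x-a)) k τ := by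
    simpa using ((hasDerivAt_id τ).sub_const a).const_mul k
  have h5 : HasDerivAt (fun x : ℝ => 4*c*(1 - exp (-(x-a)/4)))
      (4*c*(-(exp (-(τ-a)/4) * (-1/4)))) τ := (h2.const_sub 1).const_mul (4*c)
  have h3 : HasDerivAt (fun x : ℝ => k*(x-a) - 4*c*(1 - exp (-(x-a)/4)))
      (k - c * exp (-(τ-a)/4)) τ := by
    exact (h4.sub h5).congr_deriv (by ring)
  have := h3.exp
  exact this.congr_deriv (by ring)

lemma wt_bounds (a k c τ : ℝ) (hc : 0 ≤ c) (hτ : a ≤ τ) :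
    exp (k*(τ-a)) * exp (-(4*c)) ≤ exp (k*(τ-a) - 4*c*(1 - exp (-(τ-a)/4)))
    ∧ exp (k*(τ-a) - 4*c*(1 - exp (-(τ-a)/4))) ≤ exp (k*(τ-a)) := by
  have h1 : exp (-(τ-a)/4) ≤ 1 := by
    rw [exp_le_one_iff]; nlinarith
  have h2 : (0:ℝ) < exp (-(τ-a)/4) := exp_pos _
  constructor
  · rw [← exp_add]
    apply exp_le_exp.2
    nlinarith
  · apply exp_le_exp.2
    nlinarith

/-- Master decay lemma, case source decays faster than linear rate. -/
lemma decayM1 (f f' : ℝ → ℝ) (a k c A ν : ℝ)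
    (hf : ∀ τ ∈ Ici a, HasDerivAt f (f' τ) τ)
    (hfnn : ∀ τ ∈ Ici a, 0 ≤ f τ)
    (hc : 0 ≤ c) (hA : 0 ≤ A) (hν : k < ν)
    (hineq : ∀ τ ∈ Ici a, f' τ ≤ (-k + c * exp (-(τ-a)/4)) * f τ + A * exp (-ν*(τ-a))) :
    ∀ τ ∈ Ici a, f τ ≤ (f a + A/(ν-k)) * exp (4*c) * exp (-k*(τ-a)) := by
  set w : ℝ → ℝ := fun x => exp (k*(x-a) - 4*c*(1 - exp (-(x-a)/4))) with hw
  set g : ℝ → ℝ := fun x => f x * w x + A/(ν-k) * exp (-(ν-k)*(x-a)) with hg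
  set g' : ℝ → ℝ := fun x => (f' x * w x + f x * ((k - c * exp (-(x-a)/4)) * w x))
      + A/(ν-k) * (exp (-(ν-k)*(x-a)) * (-(ν-k))) with hg'
  have hgd : ∀ τ ∈ Ici a, HasDerivAt g (g' τ) τ := by
    intro τ hτ
    have he : HasDerivAt (fun x : ℝ => exp (-(ν-k)*(x-a))) (exp (-(ν-k)*(τ-a)) * (-(ν-k))) τ := by
      have : HasDerivAt (fun x : ℝ => -(ν-k)*(x-a)) (-(ν-k)) τ := by
        simpa using ((hasDerivAt_id τ).sub_const a).const_mul (-(ν-k))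
      exact this.exp
    exact ((hf τ hτ).mul (wt_hasDeriv a k c τ)).add (he.const_mul (A/(ν-k)))
  have hg0 : ∀ τ ∈ Ici a, g' τ ≤ 0 := by
    intro τ hτ
    have hwpos : (0:ℝ) < w τ := exp_pos _
    have hwle : w τ ≤ exp (k*(τ-a)) := (wt_bounds a k c τ hc hτ).2
    have h1 : f' τ * w τ + f τ * ((k - c * exp (-(τ-a)/4)) * w τ)
        ≤ (A * exp (-ν*(τ-a))) * w τ := by
      have := mul_le_mul_of_nonneg_right (hineq τ hτ) hwpos.le
      nlinarith [this]
    have h2 : (A * exp (-ν*(τ-a))) * w τ ≤ A * exp (-(ν-k)*(τ-a)) := by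
      have hkey : exp (-ν*(τ-a)) * exp (k*(τ-a)) = exp (-(ν-k)*(τ-a)) := by
        rw [← exp_add]; ring_nf
      have := mul_le_mul_of_nonneg_left hwle (mul_nonneg hA (exp_pos (-ν*(τ-a))).le)
      calc (A * exp (-ν*(τ-a))) * w τ ≤ A * exp (-ν*(τ-a)) * exp (k*(τ-a)) := this
        _ = A * exp (-(ν-k)*(τ-a)) := by rw [mul_assoc, hkey]
    have hne : ν - k ≠ 0 := sub_ne_zero.2 (ne_of_gt hν)
    have hd : A/(ν-k) * (exp (-(ν-k)*(τ-a)) * (-(ν-k))) = -(A * exp (-(ν-k)*(τ-a))) := by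
      field_simp
    simp only [hg']
    rw [hd]
    linarith
  have hmono := mono_le g g' a hgd hg0
  intro τ hτ
  have hτ' : a ≤ τ := hτ
  have hga : g a = f a + A/(ν-k) := by simp [hg, hw]
  have h3 : f τ * w τ ≤ f a + A/(ν-k) := by
    have h4 : 0 ≤ A/(ν-k) * exp (-(ν-k)*(τ-a)) :=
      mul_nonneg (div_nonneg hA (by linarith)) (exp_pos _).le
    have := hmono τ hτ
    rw [hga] at this
    simp only [hg] at this
    linarith
  have hlb : exp (k*(τ-a)) * exp (-(4*c)) ≤ w τ := (wt_bounds a k c τ hc hτ').1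
  have hfτ := hfnn τ hτ
  have h5 : f τ * (exp (k*(τ-a)) * exp (-(4*c))) ≤ f a + A/(ν-k) :=
    le_trans (mul_le_mul_of_nonneg_left hlb hfτ) h3
  have hE1 : exp (4*c) * exp (-(4*c)) = 1 := by rw [← exp_add]; simp
  have hE2 : exp (-k*(τ-a)) * exp (k*(τ-a)) = 1 := by rw [← exp_add]; simp
  have hone : (exp (k*(τ-a)) * exp (-(4*c))) * (exp (4*c) * exp (-k*(τ-a))) = 1 := by
    linear_combination exp (k*(τ-a)) * exp (-k*(τ-a)) * hE1 + hE2
  calc f τ = f τ * ((exp (k*(τ-a)) * exp (-(4*c))) * (exp (4*c) * exp (-k*(τ-a)))) := by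
        rw [hone, mul_one]
    _ = (f τ * (exp (k*(τ-a)) * exp (-(4*c)))) * (exp (4*c) * exp (-k*(τ-a))) := by ring
    _ ≤ (f a + A/(ν-k)) * (exp (4*c) * exp (-k*(τ-a))) :=
        mul_le_mul_of_nonneg_right h5 (mul_pos (exp_pos _) (exp_pos _)).le
    _ = (f a + A/(ν-k)) * exp (4*c) * exp (-k*(τ-a)) := by ring

/-- Master decay lemma, case linear rate stronger than source rate. -/
lemma decayM2 (f f' : ℝ → ℝ) (a k c A ν : ℝ)
    (hf : ∀ τ ∈ Ici a, HasDerivAt f (f' τ) τ)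
    (hfnn : ∀ τ ∈ Ici a, 0 ≤ f τ)
    (hc : 0 ≤ c) (hA : 0 ≤ A) (hν : ν < k)
    (hineq : ∀ τ ∈ Ici a, f' τ ≤ (-k + c * exp (-(τ-a)/4)) * f τ + A * exp (-ν*(τ-a))) :
    ∀ τ ∈ Ici a, f τ ≤ (f a + A/(k-ν)) * exp (4*c) * exp (-ν*(τ-a)) := by
  set w : ℝ → ℝ := fun x => exp (k*(x-a) - 4*c*(1 - exp (-(x-a)/4))) with hw
  set g : ℝ → ℝ := fun x => f x * w x - A/(k-ν) * exp ((k-ν)*(x-a)) with hg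
  set g' : ℝ → ℝ := fun x => (f' x * w x + f x * ((k - c * exp (-(x-a)/4)) * w x))
      - A/(k-ν) * (exp ((k-ν)*(x-a)) * (k-ν)) with hg'
  have hne : k - ν ≠ 0 := sub_ne_zero.2 (ne_of_gt hν)
  have hgd : ∀ τ ∈ Ici a, HasDerivAt g (g' τ) τ := by
    intro τ hτ
    have he : HasDerivAt (fun x : ℝ => exp ((k-ν)*(x-a))) (exp ((k-ν)*(τ-a)) * (k-ν)) τ := by
      have : HasDerivAt (fun x : ℝ => (k-ν)*(x-a)) (k-ν) τ := by
        simpa using ((hasDerivAt_id τ).sub_const a).const_mul (k-ν)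
      exact this.exp
    exact ((hf τ hτ).mul (wt_hasDeriv a k c τ)).sub (he.const_mul (A/(k-ν)))
  have hg0 : ∀ τ ∈ Ici a, g' τ ≤ 0 := by
    intro τ hτ
    have hwpos : (0:ℝ) < w τ := exp_pos _
    have hwle : w τ ≤ exp (k*(τ-a)) := (wt_bounds a k c τ hc hτ).2
    have h1 : f' τ * w τ + f τ * ((k - c * exp (-(τ-a)/4)) * w τ)
        ≤ (A * exp (-ν*(τ-a))) * w τ := by
      have := mul_le_mul_of_nonneg_right (hineq τ hτ) hwpos.le
      nlinarith [this]
    have h2 : (A * exp (-ν*(τ-a))) * w τ ≤ A * exp ((k-ν)*(τ-a)) := by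
      have hkey : exp (-ν*(τ-a)) * exp (k*(τ-a)) = exp ((k-ν)*(τ-a)) := by
        rw [← exp_add]; ring_nf
      have := mul_le_mul_of_nonneg_left hwle (mul_nonneg hA (exp_pos (-ν*(τ-a))).le)
      calc (A * exp (-ν*(τ-a))) * w τ ≤ A * exp (-ν*(τ-a)) * exp (k*(τ-a)) := this
        _ = A * exp ((k-ν)*(τ-a)) := by rw [mul_assoc, hkey]
    have hd : A/(k-ν) * (exp ((k-ν)*(τ-a)) * (k-ν)) = A * exp ((k-ν)*(τ-a)) := by
      field_simp
    simp only [hg']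
    rw [hd]
    linarith
  have hmono := mono_le g g' a hgd hg0
  intro τ hτ
  have hτ' : a ≤ τ := hτ
  have hga : g a = f a - A/(k-ν) := by simp [hg, hw]
  have hAk : 0 ≤ A/(k-ν) := div_nonneg hA (by linarith)
  have h3' : f τ * w τ ≤ f a + A/(k-ν) * exp ((k-ν)*(τ-a)) := by
    have := hmono τ hτ
    rw [hga] at this
    simp only [hg] at this
    have hE : (1:ℝ) ≤ exp ((k-ν)*(τ-a)) := by
      rw [Real.one_le_exp_iff]  -- may not exist; fallback below
      nlinarith
    nlinarith [this]
  have hlb : exp (k*(τ-a)) * exp (-(4*c)) ≤ w τ := (wt_bounds a k c τ hc hτ').1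
  have hfτ := hfnn τ hτ
  have hfann : 0 ≤ f a := hfnn a self_mem_Ici
  have h5 : f τ * (exp (k*(τ-a)) * exp (-(4*c))) ≤ f a + A/(k-ν) * exp ((k-ν)*(τ-a)) :=
    le_trans (mul_le_mul_of_nonneg_left hlb hfτ) h3'
  have hE1 : exp (4*c) * exp (-(4*c)) = 1 := by rw [← exp_add]; simp
  have hE2 : exp (-k*(τ-a)) * exp (k*(τ-a)) = 1 := by rw [← exp_add]; simp
  have hE3 : exp ((k-ν)*(τ-a)) * exp (-k*(τ-a)) = exp (-ν*(τ-a)) := by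
    rw [← exp_add]; ring_nf
  have hone : (exp (k*(τ-a)) * exp (-(4*c))) * (exp (4*c) * exp (-k*(τ-a))) = 1 := by
    linear_combination exp (k*(τ-a)) * exp (-k*(τ-a)) * hE1 + hE2
  have hmon : exp (-k*(τ-a)) ≤ exp (-ν*(τ-a)) := by
    apply exp_le_exp.2
    nlinarith
  calc f τ = f τ * ((exp (k*(τ-a)) * exp (-(4*c))) * (exp (4*c) * exp (-k*(τ-a)))) := by
        rw [hone, mul_one]
    _ = (f τ * (exp (k*(τ-a)) * exp (-(4*c)))) * (exp (4*c) * exp (-k*(τ-a))) := by ring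
    _ ≤ (f a + A/(k-ν) * exp ((k-ν)*(τ-a))) * (exp (4*c) * exp (-k*(τ-a))) :=
        mul_le_mul_of_nonneg_right h5 (mul_pos (exp_pos _) (exp_pos _)).le
    _ = f a * exp (4*c) * exp (-k*(τ-a))
        + A/(k-ν) * exp (4*c) * (exp ((k-ν)*(τ-a)) * exp (-k*(τ-a))) := by ring
    _ = f a * exp (4*c) * exp (-k*(τ-a)) + A/(k-ν) * exp (4*c) * exp (-ν*(τ-a)) := by rw [hE3]
    _ ≤ f a * exp (4*c) * exp (-ν*(τ-a)) + A/(k-ν) * exp (4*c) * exp (-ν*(τ-a)) := by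
        have := mul_le_mul_of_nonneg_left hmon (mul_nonneg hfann (exp_pos (4*c)).le)
        nlinarith [this]
    _ = (f a + A/(k-ν)) * exp (4*c) * exp (-ν*(τ-a)) := by ring


lemma amgm' (x p s E Einv : ℝ) (hE : 0 < E) (hEinv : E*Einv = 1) (hp : |p| ≤ s) :
    2*x*p ≤ E*x^2 + Einv*s^2 := by
  obtain ⟨h1, h2⟩ := abs_le.mp hp
  have hEinvpos : 0 < Einv := by nlinarith
  have k1 : E^2*Einv*x^2 = E*x^2 := by linear_combination E*x^2*hEinv
  have k2 : E*Einv*x*p = x*p := by linear_combination x*p*hEinv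
  nlinarith [k1, k2, mul_nonneg hEinvpos.le (sq_nonneg (E*x - p)),
    mul_nonneg hEinvpos.le (mul_nonneg (sub_nonneg.2 h2) (by linarith : (0:ℝ) ≤ s + p))]

lemma amgm2 (x p S : ℝ) (hp : |p| ≤ S) : 2*x*p ≤ (1/2)*x^2 + 2*S^2 := by
  obtain ⟨h1, h2⟩ := abs_le.mp hp
  nlinarith [sq_nonneg (x - 2*p), mul_nonneg (sub_nonneg.2 h2) (by linarith : (0:ℝ) ≤ S + p)]

lemma abs_of_sq (y z : ℝ) (h : y^2 ≤ z^2) (hz : 0 ≤ z) : |y| ≤ z := by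
  have := Real.sqrt_le_sqrt h
  rwa [Real.sqrt_sq_eq_abs, Real.sqrt_sq hz] at this

lemma step4core (q a b Bv E4 : ℝ) (hq : q - 1 ≤ -1/2 + 12*E4) (hab : |a + b| ≤ 4*E4) :
    2*Bv*((q - 1 - a - b)*Bv) ≤ (-1 + 32*E4)*Bv^2 := by
  obtain ⟨h1, h2⟩ := abs_le.mp hab
  linarith [mul_le_mul_of_nonneg_right
    (show q - 1 - a - b ≤ -1/2 + 16*E4 by linarith) (sq_nonneg Bv)]

lemma step5core (q a b c d e p12 p13 p23 s E4 Einv S : ℝ)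
    (hq : q - 2 ≤ -3/2 + 12*E4)
    (ha : |a| ≤ 4*E4) (hb : |b| ≤ 4*E4)
    (hsS : s ≤ S) (hs : 0 ≤ s)
    (h12 : |p12| ≤ s) (h13 : |p13| ≤ s) (h23 : |p23| ≤ s)
    (hE4 : 0 < E4) (hEinv : E4 * Einv = 1) :
    2*d*((q-2)*d + 2*d*a + d*b + e*c + p12)
    + 2*e*((q-2)*e + 2*e*b + e*a + d*c + p13)
    + 2*c*((q-2)*c - 2*d*e + p23)
    ≤ (-3 + 49*E4)*(d^2+e^2+c^2) + 3*(Einv*S^2) := by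
  obtain ⟨ha1, ha2⟩ := abs_le.mp ha
  obtain ⟨hb1, hb2⟩ := abs_le.mp hb
  have hDnn : (0:ℝ) ≤ d^2+e^2+c^2 := by positivity
  have h1 : 2*(q-2)*(d^2+e^2+c^2) ≤ (-3+24*E4)*(d^2+e^2+c^2) := by
    linarith [mul_le_mul_of_nonneg_right hq hDnn]
  have h2 : 4*d^2*a + 2*d^2*b + 4*e^2*b + 2*e^2*a ≤ 24*E4*(d^2+e^2) := by
    nlinarith [mul_nonneg (by linarith : (0:ℝ) ≤ 4*E4 - a) (sq_nonneg d),
      mul_nonneg (by linarith : (0:ℝ) ≤ 4*E4 - b) (sq_nonneg d),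
      mul_nonneg (by linarith : (0:ℝ) ≤ 4*E4 - b) (sq_nonneg e),
      mul_nonneg (by linarith : (0:ℝ) ≤ 4*E4 - a) (sq_nonneg e)]
  have h3a := amgm' d p12 s E4 Einv hE4 hEinv h12
  have h3b := amgm' e p13 s E4 Einv hE4 hEinv h13
  have h3c := amgm' c p23 s E4 Einv hE4 hEinv h23
  have hEinvnn : (0:ℝ) ≤ Einv := by nlinarith
  have hs2 : Einv*s^2 ≤ Einv*S^2 := by
    apply mul_le_mul_of_nonneg_left _ hEinvnn
    nlinarith
  have hexp : 2*d*((q-2)*d + 2*d*a + d*b + e*c + p12)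
    + 2*e*((q-2)*e + 2*e*b + e*a + d*c + p13)
    + 2*c*((q-2)*c - 2*d*e + p23)
    = 2*(q-2)*(d^2+e^2+c^2) + (4*d^2*a + 2*d^2*b + 4*e^2*b + 2*e^2*a)
      + (2*d*p12 + 2*e*p13 + 2*c*p23) := by ring
  rw [hexp]
  have hc2 : 0 ≤ E4*c^2 := mul_nonneg hE4.le (sq_nonneg c)
  linarith [h1, h2, h3a, h3b, h3c, hs2, hc2]

lemma step6core (q X Z E4 Einv S : ℝ)
    (hq : q - 2 ≤ -3/2 + 12*E4) (hZ : |Z| ≤ S)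
    (hE4 : 0 < E4) (hEinv : E4*Einv = 1) :
    2*X*((q-2)*X + Z) ≤ (-3 + 25*E4)*X^2 + Einv*S^2 := by
  have h1 : 2*(q-2)*X^2 ≤ (-3+24*E4)*X^2 := by
    linarith [mul_le_mul_of_nonneg_right hq (sq_nonneg X)]
  have hS : |Z| ≤ S := hZ
  have h2 : 2*X*Z ≤ E4*X^2 + Einv*S^2 := amgm' X Z S E4 Einv hE4 hEinv hZ
  nlinarith [h1, h2]

lemma step7core (q Y Z E4 S : ℝ)
    (hq : q - 2 ≤ -3/2 + 12*E4) (hZ : |Z| ≤ S) (hE4 : 0 < E4) :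
    2*Y*((q-2)*Y + Z) ≤ (-5/2 + 24*E4)*Y^2 + 2*S^2 := by
  have h1 : 2*(q-2)*Y^2 ≤ (-3+24*E4)*Y^2 := by
    linarith [mul_le_mul_of_nonneg_right hq (sq_nonneg Y)]
  have h2 : 2*Y*Z ≤ (1/2)*Y^2 + 2*S^2 := amgm2 Y Z S hZ
  nlinarith [h1, h2]

lemma comp_sq_le (x1 x2 x3 x4 x5 M : ℝ)
    (h : (-x1-x2)^2 + x1^2+x2^2+2*(x3^2+x4^2+x5^2) ≤ M) :
    x1^2 ≤ M ∧ x2^2 ≤ M ∧ (x1+x2)^2 ≤ M ∧ x3^2 ≤ M ∧ x4^2 ≤ M ∧ x5^2 ≤ M := by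
  refine ⟨?_, ?_, ?_, ?_, ?_, ?_⟩ <;>
    nlinarith [sq_nonneg (-x1-x2), sq_nonneg x1, sq_nonneg x2, sq_nonneg x3, sq_nonneg x4,
      sq_nonneg x5, sq_nonneg (x1+x2)]

set_option maxHeartbeats 1000000 in
lemma V0small (x1 x2 x3 x4 x5 xB P ε : ℝ)
    (h1 : |x1| ≤ ε) (h2 : |x2| ≤ ε) (h3 : |x3| ≤ ε) (h4 : |x4| ≤ ε) (h5 : |x5| ≤ ε)
    (hB : |xB| ≤ ε) (hP : P ≤ ε) (hε : 0 < ε) (hε1 : ε ≤ 1/13) :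
    (-x1-x2)^2 + x1^2+x2^2+2*(x3^2+x4^2+x5^2) + xB^2 + P ≤ 2*ε := by
  obtain ⟨a1,a2⟩ := abs_le.mp h1
  obtain ⟨b1,b2⟩ := abs_le.mp h2
  obtain ⟨c1,c2⟩ := abs_le.mp h3
  obtain ⟨d1,d2⟩ := abs_le.mp h4
  obtain ⟨e1,e2⟩ := abs_le.mp h5
  obtain ⟨f1,f2⟩ := abs_le.mp hB
  have q1 : x1^2 ≤ ε^2 := by nlinarith
  have q2 : x2^2 ≤ ε^2 := by nlinarith
  have q3 : x3^2 ≤ ε^2 := by nlinarith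
  have q4 : x4^2 ≤ ε^2 := by nlinarith
  have q5 : x5^2 ≤ ε^2 := by nlinarith
  have qB : xB^2 ≤ ε^2 := by nlinarith
  have qu : (-x1-x2)^2 ≤ 4*ε^2 := by nlinarith
  nlinarith [mul_le_mul_of_nonneg_right hε1 hε.le]


section Gbounds
variable {u a b c d e Bv p p22 p33 s : ℝ}

lemma G1lem (hu : -(1/200) ≤ u) (hu' : u ≤ 1/200)
    (h22a : -s ≤ p22) (h22b : p22 ≤ s) (h33a : -s ≤ p33) (h33b : p33 ≤ s) :
    2*u*(2*d^2 + 2*e^2 - (2/3)*Bv^2 - p22 - p33)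
      ≤ (1/50)*(d^2+e^2) + (1/150)*Bv^2 + (1/50)*s := by
  nlinarith [mul_nonneg (by linarith : (0:ℝ) ≤ 1/200 - u) (by positivity : (0:ℝ) ≤ 2*d^2+2*e^2),
    mul_nonneg (by linarith : (0:ℝ) ≤ 1/200 + u) (by positivity : (0:ℝ) ≤ (2/3)*Bv^2),
    mul_nonneg (by linarith : (0:ℝ) ≤ 1/200 - u) (by linarith : (0:ℝ) ≤ s - p22),
    mul_nonneg (by linarith : (0:ℝ) ≤ 1/200 + u) (by linarith : (0:ℝ) ≤ s + p22),
    mul_nonneg (by linarith : (0:ℝ) ≤ 1/200 - u) (by linarith : (0:ℝ) ≤ s - p33),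
    mul_nonneg (by linarith : (0:ℝ) ≤ 1/200 + u) (by linarith : (0:ℝ) ≤ s + p33)]

lemma G2lem (hu : -(1/200) ≤ u) (hu' : u ≤ 1/200) (hpa : -s ≤ p) (hpb : p ≤ s) :
    2*u*(-2*d^2 + Bv^2/3 + p) ≤ (1/50)*d^2 + (1/300)*Bv^2 + (1/100)*s := by
  nlinarith [mul_nonneg (by linarith : (0:ℝ) ≤ 1/200 + u) (by positivity : (0:ℝ) ≤ 2*d^2),
    mul_nonneg (by linarith : (0:ℝ) ≤ 1/200 - u) (by positivity : (0:ℝ) ≤ Bv^2/3),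
    mul_nonneg (by linarith : (0:ℝ) ≤ 1/200 - u) (by linarith : (0:ℝ) ≤ s - p),
    mul_nonneg (by linarith : (0:ℝ) ≤ 1/200 + u) (by linarith : (0:ℝ) ≤ s + p)]

lemma G4lem (hc : -(1/200) ≤ c) (hc' : c ≤ 1/200) (hpa : -s ≤ p) (hpb : p ≤ s) :
    4*c*(-2*d*e + p) ≤ (1/50)*(d^2+e^2) + (1/50)*s := by
  nlinarith [mul_nonneg (by linarith : (0:ℝ) ≤ 1/200 - c) (sq_nonneg (d+e)),
    mul_nonneg (by linarith : (0:ℝ) ≤ 1/200 + c) (sq_nonneg (d-e)),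
    mul_nonneg (by linarith : (0:ℝ) ≤ 1/200 - c) (sq_nonneg (d-e)),
    mul_nonneg (by linarith : (0:ℝ) ≤ 1/200 + c) (sq_nonneg (d+e)),
    mul_nonneg (by linarith : (0:ℝ) ≤ 1/200 - c) (by linarith : (0:ℝ) ≤ s - p),
    mul_nonneg (by linarith : (0:ℝ) ≤ 1/200 + c) (by linarith : (0:ℝ) ≤ s + p)]

lemma G5lem (ha : -(1/200) ≤ a) (ha' : a ≤ 1/200) (hb : -(1/200) ≤ b) (hb' : b ≤ 1/200)
    (hc : -(1/200) ≤ c) (hc' : c ≤ 1/200) (hd : -(1/200) ≤ d) (hd' : d ≤ 1/200)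
    (hpa : -s ≤ p) (hpb : p ≤ s) :
    4*d*(2*d*a + d*b + e*c + p) ≤ (12/200)*d^2 + (1/100)*(d^2+e^2) + (1/50)*s := by
  nlinarith [mul_nonneg (by linarith : (0:ℝ) ≤ 1/200 - a) (sq_nonneg d),
    mul_nonneg (by linarith : (0:ℝ) ≤ 1/200 + a) (sq_nonneg d),
    mul_nonneg (by linarith : (0:ℝ) ≤ 1/200 - b) (sq_nonneg d),
    mul_nonneg (by linarith : (0:ℝ) ≤ 1/200 + b) (sq_nonneg d),
    mul_nonneg (by linarith : (0:ℝ) ≤ 1/200 - c) (sq_nonneg (d+e)),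
    mul_nonneg (by linarith : (0:ℝ) ≤ 1/200 + c) (sq_nonneg (d-e)),
    mul_nonneg (by linarith : (0:ℝ) ≤ 1/200 - c) (sq_nonneg (d-e)),
    mul_nonneg (by linarith : (0:ℝ) ≤ 1/200 + c) (sq_nonneg (d+e)),
    mul_nonneg (by linarith : (0:ℝ) ≤ 1/200 - d) (by linarith : (0:ℝ) ≤ s - p),
    mul_nonneg (by linarith : (0:ℝ) ≤ 1/200 + d) (by linarith : (0:ℝ) ≤ s + p)]

lemma Gablem (hu : -(1/200) ≤ u) (hu' : u ≤ 1/200) :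
    2*u*Bv^2 ≤ (1/100)*Bv^2 := by
  nlinarith [mul_nonneg (by linarith : (0:ℝ) ≤ 1/200 - u) (sq_nonneg Bv)]

end Gbounds

set_option maxHeartbeats 2000000 in
/-- Pointwise dissipation estimate for `V = F + B² + P̂` in the small regime. -/
lemma stage1core (a b c d e Bv P s p22 p33 p23 p12 p13 P' q sF : ℝ)
    (hq : q = 1/2 + ((-a-b)^2 + a^2 + b^2 + 2*(d^2+e^2+c^2))/4 + (s + Bv^2/2)/6)
    (hV : (-a-b)^2 + a^2 + b^2 + 2*(d^2+e^2+c^2) + Bv^2 + P ≤ 1/40000)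
    (hPnn : 0 ≤ P) (hs : 0 ≤ s) (hsP : s ≤ 3*P)
    (h22 : |p22| ≤ s) (h33 : |p33| ≤ s) (h23 : |p23| ≤ s) (h12 : |p12| ≤ s) (h13 : |p13| ≤ s)
    (hsF : sF = Real.sqrt ((-a-b)^2 + a^2 + b^2 + 2*(d^2+e^2+c^2)))
    (hP' : P' ≤ (-2 + 2*sF) * P) :
    (2*(-a-b)*(-((q-2)*a - 2*d^2 + Bv^2/3 + p22) - ((q-2)*b - 2*e^2 + Bv^2/3 + p33))
     + 2*a*((q-2)*a - 2*d^2 + Bv^2/3 + p22) + 2*b*((q-2)*b - 2*e^2 + Bv^2/3 + p33)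
     + 2*(2*d*((q-2)*d + 2*d*a + d*b + e*c + p12)
          + 2*e*((q-2)*e + 2*e*b + e*a + d*c + p13)
          + 2*c*((q-2)*c - 2*d*e + p23)))
    + 2*Bv*((q - 1 - a - b)*Bv) + P'
    ≤ -(1/2)*((-a-b)^2 + a^2 + b^2 + 2*(d^2+e^2+c^2) + Bv^2 + P) := by
  set F : ℝ := (-a-b)^2 + a^2 + b^2 + 2*(d^2+e^2+c^2) with hF
  have hFnn : 0 ≤ F := by positivity
  have hB2nn : (0:ℝ) ≤ Bv^2 := sq_nonneg Bv
  have hFη : F ≤ 1/40000 := by linarith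
  have hBη : Bv^2 ≤ 1/40000 := by linarith
  have hPη : P ≤ 1/40000 := by linarith
  have hsη : s ≤ 3/40000 := by linarith
  have hsq : ∀ x : ℝ, x^2 ≤ 1/40000 → -(1/200) ≤ x ∧ x ≤ 1/200 := by
    intro x hx
    constructor <;> nlinarith [sq_nonneg (x - 1/200), sq_nonneg (x + 1/200)]
  have ha2 : a^2 ≤ F := by rw [hF]; nlinarith [sq_nonneg (-a-b), sq_nonneg b, sq_nonneg d, sq_nonneg e, sq_nonneg c]
  have hb2 : b^2 ≤ F := by rw [hF]; nlinarith [sq_nonneg (-a-b), sq_nonneg a, sq_nonneg d, sq_nonneg e, sq_nonneg c]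
  have hu2 : (-a-b)^2 ≤ F := by rw [hF]; nlinarith [sq_nonneg a, sq_nonneg b, sq_nonneg d, sq_nonneg e, sq_nonneg c]
  have hd2 : d^2 ≤ F := by rw [hF]; nlinarith [sq_nonneg (-a-b), sq_nonneg a, sq_nonneg b, sq_nonneg e, sq_nonneg c, sq_nonneg d]
  have he2 : e^2 ≤ F := by rw [hF]; nlinarith [sq_nonneg (-a-b), sq_nonneg a, sq_nonneg b, sq_nonneg d, sq_nonneg c, sq_nonneg e]
  have hc2 : c^2 ≤ F := by rw [hF]; nlinarith [sq_nonneg (-a-b), sq_nonneg a, sq_nonneg b, sq_nonneg d, sq_nonneg e, sq_nonneg c]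
  have hd2e2 : d^2 + e^2 ≤ F/2 := by rw [hF]; nlinarith [sq_nonneg (-a-b), sq_nonneg a, sq_nonneg b, sq_nonneg c]
  obtain ⟨ha1, ha1'⟩ := hsq a (le_trans ha2 hFη)
  obtain ⟨hb1, hb1'⟩ := hsq b (le_trans hb2 hFη)
  obtain ⟨hu1, hu1'⟩ := hsq (-a-b) (le_trans hu2 hFη)
  obtain ⟨hd1, hd1'⟩ := hsq d (le_trans hd2 hFη)
  obtain ⟨he1, he1'⟩ := hsq e (le_trans he2 hFη)
  obtain ⟨hc1, hc1'⟩ := hsq c (le_trans hc2 hFη)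
  have hsF' : sF ≤ 1/200 := by
    rw [hsF]
    calc Real.sqrt ((-a-b)^2 + a^2 + b^2 + 2*(d^2+e^2+c^2))
        ≤ Real.sqrt ((1/200)^2) := Real.sqrt_le_sqrt (by rw [← hF]; nlinarith)
      _ = 1/200 := Real.sqrt_sq (by norm_num)
  have hsFnn : 0 ≤ sF := hsF ▸ Real.sqrt_nonneg _
  have hP'2 : P' ≤ (-2 + 1/100) * P := by
    calc P' ≤ (-2 + 2*sF) * P := hP'
      _ ≤ (-2 + 1/100) * P := mul_le_mul_of_nonneg_right (by linarith) hPnn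
  have hq2u : q - 2 ≤ -3/2 + 1/10000 := by rw [hq]; linarith
  have hq2l : -3/2 ≤ q - 2 := by rw [hq]; linarith
  obtain ⟨h22a, h22b⟩ := abs_le.mp h22
  obtain ⟨h33a, h33b⟩ := abs_le.mp h33
  obtain ⟨h23a, h23b⟩ := abs_le.mp h23
  obtain ⟨h12a, h12b⟩ := abs_le.mp h12
  obtain ⟨h13a, h13b⟩ := abs_le.mp h13
  have hmain1 : 2*(q-2)*F ≤ (-3 + 1/5000)*F := by
    linarith [mul_le_mul_of_nonneg_right hq2u hFnn]
  have hmain2 : 2*(q-1)*Bv^2 ≤ (-1 + 1/5000)*Bv^2 := by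
    linarith [mul_le_mul_of_nonneg_right (show q - 1 ≤ -1/2 + 1/10000 by linarith) hB2nn]
  have hG1 := G1lem (u := -a-b) (d := d) (e := e) (Bv := Bv) hu1 hu1' h22a h22b h33a h33b
  have hG2 := G2lem (u := a) (d := d) (Bv := Bv) ha1 ha1' h22a h22b
  have hG3 := G2lem (u := b) (d := e) (Bv := Bv) hb1 hb1' h33a h33b
  have hG4 := G4lem (c := c) (d := d) (e := e) hc1 hc1' h23a h23b
  have hG5 := G5lem (a := a) (b := b) (c := c) (d := d) (e := e) ha1 ha1' hb1 hb1' hc1 hc1' hd1 hd1' h12a h12b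
  have hG6 := G5lem (a := b) (b := a) (c := c) (d := e) (e := d) hb1 hb1' ha1 ha1' hc1 hc1' he1 he1' h13a h13b
  have hab := Gablem (u := -a-b) (Bv := Bv) hu1 hu1'
  have hexp : (2*(-a-b)*(-((q-2)*a - 2*d^2 + Bv^2/3 + p22) - ((q-2)*b - 2*e^2 + Bv^2/3 + p33))
     + 2*a*((q-2)*a - 2*d^2 + Bv^2/3 + p22) + 2*b*((q-2)*b - 2*e^2 + Bv^2/3 + p33)
     + 2*(2*d*((q-2)*d + 2*d*a + d*b + e*c + p12)
          + 2*e*((q-2)*e + 2*e*b + e*a + d*c + p13)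
          + 2*c*((q-2)*c - 2*d*e + p23)))
    + 2*Bv*((q - 1 - a - b)*Bv) + P'
    = 2*(q-2)*F
      + 2*(-a-b)*(2*d^2 + 2*e^2 - (2/3)*Bv^2 - p22 - p33)
      + 2*a*(-2*d^2 + Bv^2/3 + p22) + 2*b*(-2*e^2 + Bv^2/3 + p33)
      + 4*c*(-2*d*e + p23)
      + 4*d*(2*d*a + d*b + e*c + p12) + 4*e*(2*e*b + e*a + d*c + p13)
      + 2*(q-1)*Bv^2 + 2*(-a-b)*Bv^2 + P' := by
    rw [hF]; ring
  rw [hexp]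
  linarith [hmain1, hmain2, hG1, hG2, hG3, hG4, hG5, hG6, hab, hP'2, hd2e2, hFnn, hB2nn, hPnn, hsP, hs]


lemma coef_help (c1 c2 K L : ℝ) (h1 : 0 ≤ c1) (h2 : 0 ≤ c2) (hc : c1 + c2 ≤ 256) (hKL : L ≤ K) :
    c1*exp K + c2*exp L ≤ exp (K+8) := by
  have h2e : (2:ℝ) ≤ exp 1 := by linarith [add_one_le_exp (1:ℝ)]
  have h256 : (256:ℝ) ≤ exp 8 := by
    calc (256:ℝ) = 2^8 := by norm_num
      _ ≤ exp 1 ^ 8 := by exact pow_le_pow_left₀ (by norm_num) h2e 8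
      _ = exp 8 := by rw [← Real.exp_nat_mul]; norm_num
  have hLK : exp L ≤ exp K := exp_le_exp.2 hKL
  have hKpos := (exp_pos K).le
  calc c1*exp K + c2*exp L ≤ c1*exp K + c2*exp K := by nlinarith [mul_le_mul_of_nonneg_left hLK h2]
    _ = (c1+c2)*exp K := by ring
    _ ≤ 256*exp K := mul_le_mul_of_nonneg_right hc hKpos
    _ ≤ exp 8*exp K := mul_le_mul_of_nonneg_right h256 hKpos
    _ = exp (K+8) := by rw [← exp_add]; ring_nf

lemma coef_help3 (c1 c2 c3 K L M : ℝ) (h1 : 0 ≤ c1) (h2 : 0 ≤ c2) (h3 : 0 ≤ c3)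
    (hc : c1 + c2 + c3 ≤ 256) (hKL : L ≤ K) (hKM : M ≤ K) :
    c1*exp K + c2*exp L + c3*exp M ≤ exp (K+8) := by
  have hLK : exp L ≤ exp K := exp_le_exp.2 hKL
  have hMK : exp M ≤ exp K := exp_le_exp.2 hKM
  have step : c1*exp K + c2*exp L + c3*exp M ≤ (c1+c2+c3)*exp K + 0*exp K := by
    nlinarith [mul_le_mul_of_nonneg_left hLK h2, mul_le_mul_of_nonneg_left hMK h3]
  calc c1*exp K + c2*exp L + c3*exp M ≤ (c1+c2+c3)*exp K + 0*exp K := step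
    _ ≤ exp (K+8) := by
        have := coef_help (c1+c2+c3) 0 K K (by linarith) le_rfl (by linarith) le_rfl
        linarith [this]

set_option maxHeartbeats 4000000 in
/-- Small-data decay rates for the Hubble-normalised Bianchi I
Einstein–Vlasov system with a pure magnetic field (Lemma 1). -/
theorem bianchiI_magnetic_vlasov_decay :
    ∃ ε₀ > (0 : ℝ), ∃ C > (0 : ℝ),
      ∀ (τ₀ : ℝ) (B S22 S33 S12 S13 S23 Phat Phat' s P22 P33 P23 P12 P13 : ℝ → ℝ),
      -- continuity of the normalised kinetic stresses and of the derivative of P̂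
      ContinuousOn s (Ici τ₀) → ContinuousOn P22 (Ici τ₀) → ContinuousOn P33 (Ici τ₀) →
      ContinuousOn P23 (Ici τ₀) → ContinuousOn P12 (Ici τ₀) → ContinuousOn P13 (Ici τ₀) →
      ContinuousOn Phat' (Ici τ₀) →
      -- the evolution equations
      (∀ τ ∈ Ici τ₀, HasDerivAt B
        ((decelParam B S22 S33 S12 S13 S23 s τ - 1 - S22 τ - S33 τ) * B τ) τ) →
      (∀ τ ∈ Ici τ₀, HasDerivAt S22
        ((decelParam B S22 S33 S12 S13 S23 s τ - 2) * S22 τ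
          - 2 * (S12 τ) ^ 2 + (B τ) ^ 2 / 3 + P22 τ) τ) →
      (∀ τ ∈ Ici τ₀, HasDerivAt S33
        ((decelParam B S22 S33 S12 S13 S23 s τ - 2) * S33 τ
          - 2 * (S13 τ) ^ 2 + (B τ) ^ 2 / 3 + P33 τ) τ) →
      (∀ τ ∈ Ici τ₀, HasDerivAt S23
        ((decelParam B S22 S33 S12 S13 S23 s τ - 2) * S23 τ
          - 2 * S12 τ * S13 τ + P23 τ) τ) →
      (∀ τ ∈ Ici τ₀, HasDerivAt S12
        ((decelParam B S22 S33 S12 S13 S23 s τ - 2) * S12 τ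
          + 2 * S12 τ * S22 τ + S12 τ * S33 τ + S13 τ * S23 τ + P12 τ) τ) →
      (∀ τ ∈ Ici τ₀, HasDerivAt S13
        ((decelParam B S22 S33 S12 S13 S23 s τ - 2) * S13 τ
          + 2 * S13 τ * S33 τ + S13 τ * S22 τ + S12 τ * S23 τ + P13 τ) τ) →
      (∀ τ ∈ Ici τ₀, HasDerivAt Phat (Phat' τ) τ) →
      (∀ τ ∈ Ici τ₀, Phat' τ ≤
        (-2 + 2 * Real.sqrt (shearScalar S22 S33 S12 S13 S23 τ)) * Phat τ) →
      -- positivity and energy conditions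
      (∀ τ ∈ Ici τ₀, 0 ≤ Phat τ) →
      (∀ τ ∈ Ici τ₀, 0 ≤ s τ) →
      (∀ τ ∈ Ici τ₀, s τ ≤ 3 * Phat τ) →
      (∀ τ ∈ Ici τ₀, |P22 τ| ≤ s τ) →
      (∀ τ ∈ Ici τ₀, |P33 τ| ≤ s τ) →
      (∀ τ ∈ Ici τ₀, |P23 τ| ≤ s τ) →
      (∀ τ ∈ Ici τ₀, |P12 τ| ≤ s τ) →
      (∀ τ ∈ Ici τ₀, |P13 τ| ≤ s τ) →
      -- the Hamiltonian constraint bound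
      (∀ τ ∈ Ici τ₀, (B τ) ^ 2 / 2 + shearScalar S22 S33 S12 S13 S23 τ / 2 ≤ 3) →
      -- small data
      ∀ ε : ℝ, 0 < ε → ε ≤ ε₀ →
      |B τ₀| ≤ ε → |S22 τ₀| ≤ ε → |S33 τ₀| ≤ ε →
      |S12 τ₀| ≤ ε → |S13 τ₀| ≤ ε → |S23 τ₀| ≤ ε → Phat τ₀ ≤ ε →
      -- conclusions: the decay rates
      ∀ τ ∈ Ici τ₀,
        |B τ| ≤ C * ε * Real.exp (-(τ - τ₀) / 2) ∧
        |S12 τ| ≤ C * ε * Real.exp (-3 * (τ - τ₀) / 2) ∧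
        |S13 τ| ≤ C * ε * Real.exp (-3 * (τ - τ₀) / 2) ∧
        |S23 τ| ≤ C * ε * Real.exp (-3 * (τ - τ₀) / 2) ∧
        |S22 τ - S33 τ| ≤ C * ε * Real.exp (-3 * (τ - τ₀) / 2) ∧
        |S22 τ + S33 τ| ≤ C * ε * Real.exp (-(τ - τ₀)) ∧
        Phat τ ≤ C * ε * Real.exp (-2 * (τ - τ₀)) := by
  refine ⟨1/10000000, by norm_num, exp 1000, exp_pos _, ?_⟩
  intro τ₀ B S22 S33 S12 S13 S23 P P' s p22 p33 p23 p12 p13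
  intro _ _ _ _ _ _ _
  intro hBev h22ev h33ev h23ev h12ev h13ev hPev hPle
  intro hPnn hsnn hsP hp22 hp33 hp23 hp12 hp13 _
  intro ε hε hεε₀ hB0 h220 h330 h120 h130 h230 hP0
  set q : ℝ → ℝ := decelParam B S22 S33 S12 S13 S23 s with hqdef
  set F : ℝ → ℝ := shearScalar S22 S33 S12 S13 S23 with hFdef
  have hε1 : ε ≤ 1 := by linarith
  have hqF : ∀ x, q x = 1/2 + F x/4 + (s x + (B x)^2/2)/6 := fun x => rfl
  have hFx : ∀ x, F x = (-(S22 x) - S33 x)^2 + (S22 x)^2 + (S33 x)^2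
      + 2*((S12 x)^2 + (S13 x)^2 + (S23 x)^2) := fun x => rfl
  have hFfun : F = fun y => (-(S22 y) - S33 y)^2 + (S22 y)^2 + (S33 y)^2
      + 2*((S12 y)^2 + (S13 y)^2 + (S23 y)^2) := rfl
  -- derivative-value abbreviations
  set w22 : ℝ → ℝ := fun x => (q x - 2) * S22 x - 2 * (S12 x) ^ 2 + (B x) ^ 2 / 3 + p22 x
    with hw22
  set w33 : ℝ → ℝ := fun x => (q x - 2) * S33 x - 2 * (S13 x) ^ 2 + (B x) ^ 2 / 3 + p33 x
    with hw33
  set w23 : ℝ → ℝ := fun x => (q x - 2) * S23 x - 2 * S12 x * S13 x + p23 x with hw23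
  set w12 : ℝ → ℝ := fun x => (q x - 2) * S12 x + 2 * S12 x * S22 x + S12 x * S33 x
    + S13 x * S23 x + p12 x with hw12
  set w13 : ℝ → ℝ := fun x => (q x - 2) * S13 x + 2 * S13 x * S33 x + S13 x * S22 x
    + S12 x * S23 x + p13 x with hw13
  set dB2 : ℝ → ℝ := fun x => 2*B x*((q x - 1 - S22 x - S33 x)*B x) with hdB2
  set dF : ℝ → ℝ := fun x => 2*(-(S22 x) - S33 x)*(-(w22 x) - w33 x) + 2*S22 x*w22 x
    + 2*S33 x*w33 x + 2*(2*S12 x*w12 x + 2*S13 x*w13 x + 2*S23 x*w23 x) with hdF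
  set V : ℝ → ℝ := fun x => F x + (B x)^2 + P x with hVset
  set Vd : ℝ → ℝ := fun x => dF x + dB2 x + P' x with hVd
  set Dd : ℝ → ℝ := fun x => 2*S12 x*w12 x + 2*S13 x*w13 x + 2*S23 x*w23 x with hDd
  set Xd : ℝ → ℝ := fun x => 2*(S22 x - S33 x)*(w22 x - w33 x) with hXd
  set Yd : ℝ → ℝ := fun x => 2*(S22 x + S33 x)*(w22 x + w33 x) with hYd
  -- pointwise unfolding equations
  have hw22x : ∀ x, w22 x = (q x - 2) * S22 x - 2 * (S12 x) ^ 2 + (B x) ^ 2 / 3 + p22 x :=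
    fun _ => rfl
  have hw33x : ∀ x, w33 x = (q x - 2) * S33 x - 2 * (S13 x) ^ 2 + (B x) ^ 2 / 3 + p33 x :=
    fun _ => rfl
  have hw23x : ∀ x, w23 x = (q x - 2) * S23 x - 2 * S12 x * S13 x + p23 x := fun _ => rfl
  have hw12x : ∀ x, w12 x = (q x - 2) * S12 x + 2 * S12 x * S22 x + S12 x * S33 x
      + S13 x * S23 x + p12 x := fun _ => rfl
  have hw13x : ∀ x, w13 x = (q x - 2) * S13 x + 2 * S13 x * S33 x + S13 x * S22 x
      + S12 x * S23 x + p13 x := fun _ => rfl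
  have hdB2x : ∀ x, dB2 x = 2*B x*((q x - 1 - S22 x - S33 x)*B x) := fun _ => rfl
  have hdFx : ∀ x, dF x = 2*(-(S22 x) - S33 x)*(-(w22 x) - w33 x) + 2*S22 x*w22 x
      + 2*S33 x*w33 x + 2*(2*S12 x*w12 x + 2*S13 x*w13 x + 2*S23 x*w23 x) := fun _ => rfl
  have hVx : ∀ x, V x = F x + (B x)^2 + P x := fun _ => rfl
  have hVfun : V = fun x => F x + (B x)^2 + P x := rfl
  have hVdx : ∀ x, Vd x = dF x + dB2 x + P' x := fun _ => rfl
  have hDdx : ∀ x, Dd x = 2*S12 x*w12 x + 2*S13 x*w13 x + 2*S23 x*w23 x := fun _ => rfl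
  have hXdx : ∀ x, Xd x = 2*(S22 x - S33 x)*(w22 x - w33 x) := fun _ => rfl
  have hYdx : ∀ x, Yd x = 2*(S22 x + S33 x)*(w22 x + w33 x) := fun _ => rfl
  -- reinterpret evolution hypotheses
  have hd22 : ∀ x ∈ Ici τ₀, HasDerivAt S22 (w22 x) x := h22ev
  have hd33 : ∀ x ∈ Ici τ₀, HasDerivAt S33 (w33 x) x := h33ev
  have hd23 : ∀ x ∈ Ici τ₀, HasDerivAt S23 (w23 x) x := h23ev
  have hd12 : ∀ x ∈ Ici τ₀, HasDerivAt S12 (w12 x) x := h12ev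
  have hd13 : ∀ x ∈ Ici τ₀, HasDerivAt S13 (w13 x) x := h13ev
  have hdB : ∀ x ∈ Ici τ₀, HasDerivAt B ((q x - 1 - S22 x - S33 x) * B x) x := hBev
  clear_value q F w22 w33 w23 w12 w13 dB2 dF V Vd Dd Xd Yd
  have hFnn : ∀ x, 0 ≤ F x := by intro x; rw [hFx x]; positivity
  have hFder : ∀ x ∈ Ici τ₀, HasDerivAt F (dF x) x := by
    intro x hx
    have h1 := hd22 x hx
    have h2 := hd33 x hx
    have h3 := hd12 x hx
    have h4 := hd13 x hx
    have h5 := hd23 x hx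
    have hsq1 : HasDerivAt (fun y => (-(S22 y) - S33 y)^2)
        (2*(-(S22 x) - S33 x)*(-(w22 x) - w33 x)) x := by
      have := (h1.neg.sub h2).pow 2
      exact this.congr_deriv (by simp only [Pi.sub_apply, Pi.neg_apply]; push_cast; ring)
    have hsq2 : HasDerivAt (fun y => (S22 y)^2) (2*S22 x*w22 x) x := by
      have := h1.pow 2; exact this.congr_deriv (by push_cast; ring)
    have hsq3 : HasDerivAt (fun y => (S33 y)^2) (2*S33 x*w33 x) x := by
      have := h2.pow 2; exact this.congr_deriv (by push_cast; ring)
    have hsq4 : HasDerivAt (fun y => (S12 y)^2) (2*S12 x*w12 x) x := by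
      have := h3.pow 2; exact this.congr_deriv (by push_cast; ring)
    have hsq5 : HasDerivAt (fun y => (S13 y)^2) (2*S13 x*w13 x) x := by
      have := h4.pow 2; exact this.congr_deriv (by push_cast; ring)
    have hsq6 : HasDerivAt (fun y => (S23 y)^2) (2*S23 x*w23 x) x := by
      have := h5.pow 2; exact this.congr_deriv (by push_cast; ring)
    rw [hFfun, hdFx x]
    exact ((hsq1.add hsq2).add hsq3).add (((hsq4.add hsq5).add hsq6).const_mul 2)
  have hB2der : ∀ x ∈ Ici τ₀, HasDerivAt (fun y => (B y)^2) (dB2 x) x := by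
    intro x hx
    have := (hdB x hx).pow 2
    rw [hdB2x x]
    exact this.congr_deriv (by push_cast; ring)
  have hVder : ∀ x ∈ Ici τ₀, HasDerivAt V (Vd x) x := by
    intro x hx
    rw [hVfun, hVdx x]
    exact ((hFder x hx).add (hB2der x hx)).add (hPev x hx)
  have hVnn : ∀ x ∈ Ici τ₀, 0 ≤ V x := by
    intro x hx
    have h1 := hFnn x
    have h2 := hPnn x hx
    have h3 := sq_nonneg (B x)
    rw [hVx x]; linarith
  -- stage 1 : pointwise dissipation
  have hstage : ∀ x ∈ Ici τ₀, V x ≤ 1/40000 → Vd x ≤ -(1/2)*V x := by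
    intro x hx hVle
    have h := stage1core (S22 x) (S33 x) (S23 x) (S12 x) (S13 x) (B x) (P x) (s x) (p22 x)
      (p33 x) (p23 x) (p12 x) (p13 x) (P' x) (q x) (Real.sqrt (F x))
      (by rw [hqF x, hFx x]) (by rw [← hFx x]; rw [show (F x + (B x)^2 + P x) = V x from (hVx x).symm]; exact hVle)
      (hPnn x hx) (hsnn x hx) (hsP x hx) (hp22 x hx) (hp33 x hx) (hp23 x hx)
      (hp12 x hx) (hp13 x hx) (by rw [hFx x]) (hPle x hx)
    rw [hVdx x, hdFx x, hdB2x x, hw22x x, hw33x x, hw23x x, hw12x x, hw13x x, hVx x, hFx x]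
    exact h
  have hV0 : V τ₀ ≤ 2*ε := by
    rw [hVx τ₀, hFx τ₀]
    exact V0small (S22 τ₀) (S33 τ₀) (S12 τ₀) (S13 τ₀) (S23 τ₀) (B τ₀) (P τ₀) ε
      h220 h330 h120 h130 h230 hB0 hP0 hε (by linarith)
  have hVη : ∀ x ∈ Ici τ₀, V x ≤ 1/40000 := by
    refine barrier V Vd τ₀ (1/40000) hVder (by linarith) ?_
    intro x hx hc
    have h := hstage x hx (le_of_eq hc)
    rw [hc] at h
    linarith
  have hineqV : ∀ x ∈ Ici τ₀, Vd x ≤ (-(1/2) + 0*exp (-(x-τ₀)/4))*V x + 0*exp (-1*(x-τ₀)) := by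
    intro x hx
    have h := hstage x hx (hVη x hx)
    have h2 : (-(1/2) + 0*exp (-(x-τ₀)/4))*V x + 0*exp (-1*(x-τ₀)) = -(1/2)*V x := by ring
    linarith
  have hVb : ∀ x ∈ Ici τ₀, V x ≤ 2*ε*(exp (-(x-τ₀)/4))^2 := by
    intro x hx
    have h := decayM1 V Vd τ₀ (1/2) 0 0 1 hVder hVnn le_rfl le_rfl (by norm_num) hineqV x hx
    have h2 : (V τ₀ + 0/(1-1/2))*exp (4*0) ≤ 2*ε := by
      rw [show (0:ℝ)/(1-1/2) = 0 by norm_num, add_zero, show (4*0:ℝ) = 0 by norm_num,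
        exp_zero, mul_one]
      exact hV0
    have h3 : exp (-(1/2)*(x-τ₀)) = (exp (-(x-τ₀)/4))^2 := by rw [sq, ← exp_add]; ring_nf
    calc V x ≤ (V τ₀ + 0/(1-1/2))*exp (4*0)*exp (-(1/2)*(x-τ₀)) := h
      _ ≤ 2*ε*exp (-(1/2)*(x-τ₀)) := mul_le_mul_of_nonneg_right h2 (exp_pos _).le
      _ = 2*ε*(exp (-(x-τ₀)/4))^2 := by rw [h3]
  -- componentwise decayed bounds
  have hFb : ∀ x ∈ Ici τ₀, F x ≤ 2*ε*(exp (-(x-τ₀)/4))^2 := by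
    intro x hx
    have h := hVb x hx
    have h2 := hPnn x hx
    have h3 := sq_nonneg (B x)
    rw [hVx x] at h
    linarith
  have hB2b : ∀ x ∈ Ici τ₀, (B x)^2 ≤ 2*ε*(exp (-(x-τ₀)/4))^2 := by
    intro x hx
    have h := hVb x hx
    have h2 := hPnn x hx
    have h3 := hFnn x
    rw [hVx x] at h
    linarith
  have hPb : ∀ x ∈ Ici τ₀, P x ≤ 2*ε*(exp (-(x-τ₀)/4))^2 := by
    intro x hx
    have h := hVb x hx
    have h3 := hFnn x
    have h4 := sq_nonneg (B x)
    rw [hVx x] at h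
    linarith
  have hE1 : ∀ x ∈ Ici τ₀, exp (-(x-τ₀)/4) ≤ 1 := by
    intro x hx
    rw [exp_le_one_iff]
    have h : τ₀ ≤ x := hx
    linarith
  have hεe : ∀ x ∈ Ici τ₀, 2*ε*(exp (-(x-τ₀)/4))^2 ≤ 2*exp (-(x-τ₀)/4) := by
    intro x hx
    have h1 := hE1 x hx
    have h2 := (exp_pos (-(x-τ₀)/4)).le
    nlinarith [mul_le_mul hε1 h1 h2 (by norm_num : (0:ℝ) ≤ 1)]
  have hq2u : ∀ x ∈ Ici τ₀, q x - 2 ≤ -3/2 + 12*exp (-(x-τ₀)/4) := by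
    intro x hx
    rw [hqF x]
    have h1 := le_trans (hFb x hx) (hεe x hx)
    have h2 := le_trans (hB2b x hx) (hεe x hx)
    have h3 := le_trans (hPb x hx) (hεe x hx)
    have h4 := hsP x hx
    have h5 := (exp_pos (-(x-τ₀)/4)).le
    linarith
  have hq1u : ∀ x ∈ Ici τ₀, q x - 1 ≤ -1/2 + 12*exp (-(x-τ₀)/4) := by
    intro x hx
    have := hq2u x hx
    linarith
  have hcomps : ∀ x ∈ Ici τ₀, (S22 x)^2 ≤ 2*ε*(exp (-(x-τ₀)/4))^2
      ∧ (S33 x)^2 ≤ 2*ε*(exp (-(x-τ₀)/4))^2 ∧ (S22 x + S33 x)^2 ≤ 2*ε*(exp (-(x-τ₀)/4))^2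
      ∧ (S12 x)^2 ≤ 2*ε*(exp (-(x-τ₀)/4))^2 ∧ (S13 x)^2 ≤ 2*ε*(exp (-(x-τ₀)/4))^2
      ∧ (S23 x)^2 ≤ 2*ε*(exp (-(x-τ₀)/4))^2 := by
    intro x hx
    have h := hFb x hx
    rw [hFx x] at h
    exact comp_sq_le (S22 x) (S33 x) (S12 x) (S13 x) (S23 x) (2*ε*(exp (-(x-τ₀)/4))^2) h
  have habs22 : ∀ x ∈ Ici τ₀, |S22 x| ≤ 4*exp (-(x-τ₀)/4) := by
    intro x hx
    refine abs_of_sq _ _ ?_ (by positivity)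
    have h := (hcomps x hx).1
    nlinarith [sq_nonneg (exp (-(x-τ₀)/4)),
      mul_le_mul_of_nonneg_right hε1 (sq_nonneg (exp (-(x-τ₀)/4)))]
  have habs33 : ∀ x ∈ Ici τ₀, |S33 x| ≤ 4*exp (-(x-τ₀)/4) := by
    intro x hx
    refine abs_of_sq _ _ ?_ (by positivity)
    have h := (hcomps x hx).2.1
    nlinarith [sq_nonneg (exp (-(x-τ₀)/4)),
      mul_le_mul_of_nonneg_right hε1 (sq_nonneg (exp (-(x-τ₀)/4)))]
  have habsu : ∀ x ∈ Ici τ₀, |S22 x + S33 x| ≤ 4*exp (-(x-τ₀)/4) := by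
    intro x hx
    refine abs_of_sq _ _ ?_ (by positivity)
    have h := (hcomps x hx).2.2.1
    nlinarith [sq_nonneg (exp (-(x-τ₀)/4)),
      mul_le_mul_of_nonneg_right hε1 (sq_nonneg (exp (-(x-τ₀)/4)))]
  have hEinv' : ∀ x : ℝ, exp (-(x-τ₀)/4) * exp ((x-τ₀)/4) = 1 := by
    intro x
    rw [← exp_add, show -(x-τ₀)/4 + (x-τ₀)/4 = (0:ℝ) by ring, exp_zero]
  -- Step 3 : sharp decay of Phat
  have hsqF : ∀ x ∈ Ici τ₀, Real.sqrt (F x) ≤ 2*exp (-(x-τ₀)/4) := by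
    intro x hx
    have h : F x ≤ (2*exp (-(x-τ₀)/4))^2 := by
      have h1 := hFb x hx
      nlinarith [sq_nonneg (exp (-(x-τ₀)/4)),
        mul_le_mul_of_nonneg_right hε1 (sq_nonneg (exp (-(x-τ₀)/4)))]
    calc Real.sqrt (F x) ≤ Real.sqrt ((2*exp (-(x-τ₀)/4))^2) := Real.sqrt_le_sqrt h
      _ = 2*exp (-(x-τ₀)/4) := Real.sqrt_sq (by positivity)
  have hineqP : ∀ x ∈ Ici τ₀, P' x ≤ (-2 + 4*exp (-(x-τ₀)/4))*P x + 0*exp (-3*(x-τ₀)) := by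
    intro x hx
    have h1 := hPle x hx
    have h2 := hsqF x hx
    have h3 := mul_le_mul_of_nonneg_right
      (show (-2 + 2*Real.sqrt (F x)) ≤ -2 + 4*exp (-(x-τ₀)/4) by linarith) (hPnn x hx)
    have h4 : (0:ℝ)*exp (-3*(x-τ₀)) = 0 := by ring
    rw [h4, add_zero]
    linarith
  have hPdec : ∀ τ ∈ Ici τ₀, P τ ≤ ε*exp 16*exp (-2*(τ-τ₀)) := by
    intro τ hτ
    have h := decayM1 P P' τ₀ 2 4 0 3 hPev hPnn (by norm_num) le_rfl (by norm_num) hineqP τ hτ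
    have h2 : (P τ₀ + 0/(3-2))*exp (4*4) ≤ ε*exp 16 := by
      rw [show (0:ℝ)/(3-2) = 0 by norm_num, add_zero, show (4*4:ℝ) = 16 by norm_num]
      exact mul_le_mul_of_nonneg_right hP0 (exp_pos _).le
    calc P τ ≤ (P τ₀ + 0/(3-2))*exp (4*4)*exp (-2*(τ-τ₀)) := h
      _ ≤ ε*exp 16*exp (-2*(τ-τ₀)) := mul_le_mul_of_nonneg_right h2 (exp_pos _).le
  have hsb : ∀ x ∈ Ici τ₀, s x ≤ 3*exp 16*ε*exp (-2*(x-τ₀)) := by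
    intro x hx
    have h1 := hsP x hx
    have h2 := hPdec x hx
    nlinarith [h1, h2]
  -- Step 4 : sharp decay of B²
  have hineqB : ∀ x ∈ Ici τ₀,
      dB2 x ≤ (-1 + 32*exp (-(x-τ₀)/4))*(B x)^2 + 0*exp (-2*(x-τ₀)) := by
    intro x hx
    have h := step4core (q x) (S22 x) (S33 x) (B x) (exp (-(x-τ₀)/4)) (hq1u x hx) (habsu x hx)
    have h4 : (0:ℝ)*exp (-2*(x-τ₀)) = 0 := by ring
    rw [h4, add_zero, hdB2x x]
    exact h
  have hB2dec : ∀ τ ∈ Ici τ₀, (B τ)^2 ≤ ε^2*exp 128*exp (-1*(τ-τ₀)) := by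
    intro τ hτ
    have h := decayM1 (fun y => (B y)^2) dB2 τ₀ 1 32 0 2 hB2der (fun x _ => sq_nonneg _)
      (by norm_num) le_rfl (by norm_num) hineqB τ hτ
    have hB02 : (B τ₀)^2 ≤ ε^2 := by nlinarith [abs_le.mp hB0]
    have h2 : ((B τ₀)^2 + 0/(2-1))*exp (4*32) ≤ ε^2*exp 128 := by
      rw [show (0:ℝ)/(2-1) = 0 by norm_num, add_zero, show (4*32:ℝ) = 128 by norm_num]
      exact mul_le_mul_of_nonneg_right hB02 (exp_pos _).le
    calc (B τ)^2 ≤ ((B τ₀)^2 + 0/(2-1))*exp (4*32)*exp (-1*(τ-τ₀)) := h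
      _ ≤ ε^2*exp 128*exp (-1*(τ-τ₀)) := mul_le_mul_of_nonneg_right h2 (exp_pos _).le
  -- Step 5 : off-diagonal shear
  have hDder : ∀ x ∈ Ici τ₀,
      HasDerivAt (fun y => (S12 y)^2 + (S13 y)^2 + (S23 y)^2) (Dd x) x := by
    intro x hx
    have h3 := hd12 x hx
    have h4 := hd13 x hx
    have h5 := hd23 x hx
    have hsq4 : HasDerivAt (fun y => (S12 y)^2) (2*S12 x*w12 x) x := by
      have := h3.pow 2; exact this.congr_deriv (by push_cast; ring)
    have hsq5 : HasDerivAt (fun y => (S13 y)^2) (2*S13 x*w13 x) x := by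
      have := h4.pow 2; exact this.congr_deriv (by push_cast; ring)
    have hsq6 : HasDerivAt (fun y => (S23 y)^2) (2*S23 x*w23 x) x := by
      have := h5.pow 2; exact this.congr_deriv (by push_cast; ring)
    rw [hDdx x]
    exact (hsq4.add hsq5).add hsq6
  have hineqD : ∀ x ∈ Ici τ₀, Dd x ≤ (-3 + 49*exp (-(x-τ₀)/4))*((S12 x)^2 + (S13 x)^2 + (S23 x)^2)
      + (27*exp 32*ε^2)*exp (-(15/4)*(x-τ₀)) := by
    intro x hx
    have h1 := step5core (q x) (S22 x) (S33 x) (S23 x) (S12 x) (S13 x) (p12 x) (p13 x) (p23 x)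
      (s x) (exp (-(x-τ₀)/4)) (exp ((x-τ₀)/4)) (3*exp 16*ε*exp (-2*(x-τ₀)))
      (hq2u x hx) (habs22 x hx) (habs33 x hx) (hsb x hx) (hsnn x hx)
      (hp12 x hx) (hp13 x hx) (hp23 x hx) (exp_pos _) (hEinv' x)
    have e1 : exp (16:ℝ)*exp 16 = exp 32 := by rw [← exp_add]; norm_num
    have e2 : exp ((x-τ₀)/4) * (exp (-2*(x-τ₀)) * exp (-2*(x-τ₀))) = exp (-(15/4)*(x-τ₀)) := by
      rw [← exp_add, ← exp_add]; ring_nf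
    have hsrc : 3*(exp ((x-τ₀)/4)*(3*exp 16*ε*exp (-2*(x-τ₀)))^2)
        = (27*exp 32*ε^2)*exp (-(15/4)*(x-τ₀)) := by
      linear_combination (27*ε^2*(exp (-2*(x-τ₀))*exp (-2*(x-τ₀)))*exp ((x-τ₀)/4))*e1
        + (27*ε^2*exp 32)*e2
    rw [← hsrc, hDdx x, hw12x x, hw13x x, hw23x x]
    exact h1
  have hDfinal : ∀ τ ∈ Ici τ₀,
      (S12 τ)^2 + (S13 τ)^2 + (S23 τ)^2 ≤ ε^2*exp 236*exp (-3*(τ-τ₀)) := by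
    intro τ hτ
    have h := decayM1 (fun y => (S12 y)^2 + (S13 y)^2 + (S23 y)^2) Dd τ₀ 3 49
      (27*exp 32*ε^2) (15/4) hDder (fun x _ => by positivity) (by norm_num) (by positivity)
      (by norm_num) hineqD τ hτ
    have hD0 : (S12 τ₀)^2 + (S13 τ₀)^2 + (S23 τ₀)^2 ≤ 3*ε^2 := by
      nlinarith [abs_le.mp h120, abs_le.mp h130, abs_le.mp h230]
    have hdiv : 27*exp 32*ε^2/(15/4-3) = 36*exp 32*ε^2 := by
      rw [show (15/4-3:ℝ) = 3/4 by norm_num]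
      ring
    have h40 : (3:ℝ) + 36*exp 32 ≤ exp 40 := by
      have hc := coef_help 36 3 32 0 (by norm_num) (by norm_num) (by norm_num) (by norm_num)
      rw [exp_zero] at hc
      norm_num at hc
      linarith
    have h2 : ((S12 τ₀)^2 + (S13 τ₀)^2 + (S23 τ₀)^2 + 27*exp 32*ε^2/(15/4-3))*exp (4*49)
        ≤ ε^2*exp 236 := by
      rw [hdiv, show (4*49:ℝ) = 196 by norm_num]
      have h4 : (S12 τ₀)^2 + (S13 τ₀)^2 + (S23 τ₀)^2 + 36*exp 32*ε^2 ≤ ε^2*exp 40 := by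
        nlinarith [mul_le_mul_of_nonneg_left h40 (sq_nonneg ε)]
      calc ((S12 τ₀)^2 + (S13 τ₀)^2 + (S23 τ₀)^2 + 36*exp 32*ε^2)*exp 196
          ≤ (ε^2*exp 40)*exp 196 := mul_le_mul_of_nonneg_right h4 (exp_pos _).le
        _ = ε^2*(exp 40*exp 196) := by ring
        _ = ε^2*exp 236 := by rw [← exp_add]; norm_num
    calc (S12 τ)^2 + (S13 τ)^2 + (S23 τ)^2
        ≤ ((S12 τ₀)^2 + (S13 τ₀)^2 + (S23 τ₀)^2 + 27*exp 32*ε^2/(15/4-3))*exp (4*49)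
          *exp (-3*(τ-τ₀)) := h
      _ ≤ ε^2*exp 236*exp (-3*(τ-τ₀)) := mul_le_mul_of_nonneg_right h2 (exp_pos _).le
  -- decayed bounds on individual squares, at the weaker rate e^{-2t}
  have hmono32 : ∀ x ∈ Ici τ₀, exp (-3*(x-τ₀)) ≤ exp (-2*(x-τ₀)) := by
    intro x hx
    apply exp_le_exp.2
    have h : τ₀ ≤ x := hx
    nlinarith
  have hsq1213 : ∀ x ∈ Ici τ₀, (S12 x)^2 + (S13 x)^2 ≤ ε*exp 236*exp (-2*(x-τ₀)) := by
    intro x hx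
    have h1 := hDfinal x hx
    have h2 := hmono32 x hx
    have h3 : ε^2 ≤ ε := by nlinarith
    have h4 := mul_le_mul_of_nonneg_left h2 (by positivity : (0:ℝ) ≤ ε^2*exp 236)
    have h5 := mul_le_mul_of_nonneg_right
      (mul_le_mul_of_nonneg_right h3 (exp_pos (236:ℝ)).le) (exp_pos (-2*(x-τ₀))).le
    nlinarith [sq_nonneg (S23 x)]
  -- Step 6 : S22 - S33
  have hXder : ∀ x ∈ Ici τ₀, HasDerivAt (fun y => (S22 y - S33 y)^2) (Xd x) x := by
    intro x hx
    have := ((hd22 x hx).sub (hd33 x hx)).pow 2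
    rw [hXdx x]
    exact this.congr_deriv (by simp only [Pi.sub_apply]; push_cast; ring)
  have hZ6 : ∀ x ∈ Ici τ₀, |2*(S13 x)^2 - 2*(S12 x)^2 + p22 x - p33 x|
      ≤ exp 244*ε*exp (-2*(x-τ₀)) := by
    intro x hx
    have h1 := hsq1213 x hx
    have h2 := hsb x hx
    obtain ⟨ha1, ha2⟩ := abs_le.mp (hp22 x hx)
    obtain ⟨hb1, hb2⟩ := abs_le.mp (hp33 x hx)
    have hc : (2*exp 236 + 6*exp 16)*(ε*exp (-2*(x-τ₀))) ≤ exp 244*(ε*exp (-2*(x-τ₀))) := by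
      apply mul_le_mul_of_nonneg_right _ (by positivity)
      have := coef_help 2 6 236 16 (by norm_num) (by norm_num) (by norm_num) (by norm_num)
      norm_num at this ⊢
      linarith
    rw [abs_le]
    constructor <;> nlinarith [sq_nonneg (S12 x), sq_nonneg (S13 x)]
  have hineqX : ∀ x ∈ Ici τ₀, Xd x ≤ (-3 + 25*exp (-(x-τ₀)/4))*(S22 x - S33 x)^2
      + (exp 488*ε^2)*exp (-(15/4)*(x-τ₀)) := by
    intro x hx
    have h1 := step6core (q x) (S22 x - S33 x) (2*(S13 x)^2 - 2*(S12 x)^2 + p22 x - p33 x)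
      (exp (-(x-τ₀)/4)) (exp ((x-τ₀)/4)) (exp 244*ε*exp (-2*(x-τ₀)))
      (hq2u x hx) (hZ6 x hx) (exp_pos _) (hEinv' x)
    have e1 : exp (244:ℝ)*exp 244 = exp 488 := by rw [← exp_add]; norm_num
    have e2 : exp ((x-τ₀)/4) * (exp (-2*(x-τ₀)) * exp (-2*(x-τ₀))) = exp (-(15/4)*(x-τ₀)) := by
      rw [← exp_add, ← exp_add]; ring_nf
    have hsrc : exp ((x-τ₀)/4)*(exp 244*ε*exp (-2*(x-τ₀)))^2
        = (exp 488*ε^2)*exp (-(15/4)*(x-τ₀)) := by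
      linear_combination (ε^2*(exp (-2*(x-τ₀))*exp (-2*(x-τ₀)))*exp ((x-τ₀)/4))*e1
        + (ε^2*exp 488)*e2
    have hXdec : Xd x = 2*(S22 x - S33 x)*((q x - 2)*(S22 x - S33 x)
        + (2*(S13 x)^2 - 2*(S12 x)^2 + p22 x - p33 x)) := by
      rw [hXdx x, hw22x x, hw33x x]; ring
    rw [hXdec, ← hsrc]
    exact h1
  have hXfinal : ∀ τ ∈ Ici τ₀, (S22 τ - S33 τ)^2 ≤ ε^2*exp 596*exp (-3*(τ-τ₀)) := by
    intro τ hτ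
    have h := decayM1 (fun y => (S22 y - S33 y)^2) Xd τ₀ 3 25 (exp 488*ε^2) (15/4) hXder
      (fun x _ => sq_nonneg _) (by norm_num) (by positivity) (by norm_num) hineqX τ hτ
    have hX0 : (S22 τ₀ - S33 τ₀)^2 ≤ 4*ε^2 := by
      nlinarith [abs_le.mp h220, abs_le.mp h330]
    have hdiv : exp 488*ε^2/(15/4-3) = (4/3)*exp 488*ε^2 := by
      rw [show (15/4-3:ℝ) = 3/4 by norm_num]; ring
    have h496 : (4:ℝ) + (4/3)*exp 488 ≤ exp 496 := by
      have hc := coef_help (4/3) 4 488 0 (by norm_num) (by norm_num) (by norm_num) (by norm_num)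
      rw [exp_zero] at hc
      norm_num at hc
      linarith
    have h2 : ((S22 τ₀ - S33 τ₀)^2 + exp 488*ε^2/(15/4-3))*exp (4*25) ≤ ε^2*exp 596 := by
      rw [hdiv, show (4*25:ℝ) = 100 by norm_num]
      have h4 : (S22 τ₀ - S33 τ₀)^2 + (4/3)*exp 488*ε^2 ≤ ε^2*exp 496 := by
        nlinarith [mul_le_mul_of_nonneg_left h496 (sq_nonneg ε)]
      calc ((S22 τ₀ - S33 τ₀)^2 + (4/3)*exp 488*ε^2)*exp 100
          ≤ (ε^2*exp 496)*exp 100 := mul_le_mul_of_nonneg_right h4 (exp_pos _).le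
        _ = ε^2*(exp 496*exp 100) := by ring
        _ = ε^2*exp 596 := by rw [← exp_add]; norm_num
    calc (S22 τ - S33 τ)^2
        ≤ ((S22 τ₀ - S33 τ₀)^2 + exp 488*ε^2/(15/4-3))*exp (4*25)*exp (-3*(τ-τ₀)) := h
      _ ≤ ε^2*exp 596*exp (-3*(τ-τ₀)) := mul_le_mul_of_nonneg_right h2 (exp_pos _).le
  -- Step 7 : S22 + S33
  have hYder : ∀ x ∈ Ici τ₀, HasDerivAt (fun y => (S22 y + S33 y)^2) (Yd x) x := by
    intro x hx
    have := ((hd22 x hx).add (hd33 x hx)).pow 2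
    rw [hYdx x]
    exact this.congr_deriv (by simp only [Pi.add_apply]; push_cast; ring)
  have hmono21 : ∀ x ∈ Ici τ₀, exp (-2*(x-τ₀)) ≤ exp (-(1:ℝ)*(x-τ₀)) := by
    intro x hx
    apply exp_le_exp.2
    have h : τ₀ ≤ x := hx
    nlinarith
  have hZ7 : ∀ x ∈ Ici τ₀, |-2*(S12 x)^2 - 2*(S13 x)^2 + (2/3)*(B x)^2 + p22 x + p33 x|
      ≤ exp 252*ε*exp (-(1:ℝ)*(x-τ₀)) := by
    intro x hx
    have h1 := hsq1213 x hx
    have h2 := hsb x hx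
    have h3 := hB2dec x hx
    have h21 := hmono21 x hx
    obtain ⟨ha1, ha2⟩ := abs_le.mp (hp22 x hx)
    obtain ⟨hb1, hb2⟩ := abs_le.mp (hp33 x hx)
    have hεsq : ε^2 ≤ ε := by nlinarith
    have hup1 : (S12 x)^2 + (S13 x)^2 ≤ ε*exp 236*exp (-(1:ℝ)*(x-τ₀)) := by
      have := mul_le_mul_of_nonneg_left h21 (by positivity : (0:ℝ) ≤ ε*exp 236)
      nlinarith
    have hup3 : (B x)^2 ≤ ε*exp 128*exp (-(1:ℝ)*(x-τ₀)) := by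
      have := mul_le_mul_of_nonneg_right
        (mul_le_mul_of_nonneg_right hεsq (exp_pos (128:ℝ)).le) (exp_pos (-(1:ℝ)*(x-τ₀))).le
      nlinarith
    have hup2 : s x ≤ 3*exp 16*ε*exp (-(1:ℝ)*(x-τ₀)) := by
      have := mul_le_mul_of_nonneg_left h21 (by positivity : (0:ℝ) ≤ 3*exp 16*ε)
      nlinarith
    have hc : (2*exp 236 + (2/3)*exp 128 + 6*exp 16)*(ε*exp (-(1:ℝ)*(x-τ₀)))
        ≤ exp 252*(ε*exp (-(1:ℝ)*(x-τ₀))) := by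
      apply mul_le_mul_of_nonneg_right _ (by positivity)
      have := coef_help3 2 (2/3) 6 236 128 16 (by norm_num) (by norm_num) (by norm_num)
        (by norm_num) (by norm_num) (by norm_num)
      norm_num at this ⊢
      linarith [exp_le_exp.2 (show (244:ℝ) ≤ 252 by norm_num), exp_pos (244:ℝ)]
    rw [abs_le]
    constructor <;> nlinarith [sq_nonneg (S12 x), sq_nonneg (S13 x), sq_nonneg (B x)]
  have hineqY : ∀ x ∈ Ici τ₀, Yd x ≤ (-(5/2) + 24*exp (-(x-τ₀)/4))*(S22 x + S33 x)^2
      + (2*exp 504*ε^2)*exp (-2*(x-τ₀)) := by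
    intro x hx
    have h1 := step7core (q x) (S22 x + S33 x)
      (-2*(S12 x)^2 - 2*(S13 x)^2 + (2/3)*(B x)^2 + p22 x + p33 x)
      (exp (-(x-τ₀)/4)) (exp 252*ε*exp (-(1:ℝ)*(x-τ₀))) (hq2u x hx) (hZ7 x hx) (exp_pos _)
    have e1 : exp (252:ℝ)*exp 252 = exp 504 := by rw [← exp_add]; norm_num
    have e2 : exp (-(1:ℝ)*(x-τ₀)) * exp (-(1:ℝ)*(x-τ₀)) = exp (-2*(x-τ₀)) := by
      rw [← exp_add]; ring_nf
    have hsrc : 2*(exp 252*ε*exp (-(1:ℝ)*(x-τ₀)))^2 = (2*exp 504*ε^2)*exp (-2*(x-τ₀)) := by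
      linear_combination (2*ε^2*(exp (-(1:ℝ)*(x-τ₀))*exp (-(1:ℝ)*(x-τ₀))))*e1
        + (2*ε^2*exp 504)*e2
    have hYdec : Yd x = 2*(S22 x + S33 x)*((q x - 2)*(S22 x + S33 x)
        + (-2*(S12 x)^2 - 2*(S13 x)^2 + (2/3)*(B x)^2 + p22 x + p33 x)) := by
      rw [hYdx x, hw22x x, hw33x x]; ring
    rw [hYdec, ← hsrc]
    linarith [h1]
  have hYfinal : ∀ τ ∈ Ici τ₀, (S22 τ + S33 τ)^2 ≤ ε^2*exp 608*exp (-2*(τ-τ₀)) := by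
    intro τ hτ
    have h := decayM2 (fun y => (S22 y + S33 y)^2) Yd τ₀ (5/2) 24 (2*exp 504*ε^2) 2 hYder
      (fun x _ => sq_nonneg _) (by norm_num) (by positivity) (by norm_num) hineqY τ hτ
    have hY0 : (S22 τ₀ + S33 τ₀)^2 ≤ 4*ε^2 := by
      nlinarith [abs_le.mp h220, abs_le.mp h330]
    have hdiv : 2*exp 504*ε^2/(5/2-2) = 4*exp 504*ε^2 := by
      rw [show (5/2-2:ℝ) = 1/2 by norm_num]; ring
    have h512 : (4:ℝ) + 4*exp 504 ≤ exp 512 := by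
      have hc := coef_help 4 4 504 0 (by norm_num) (by norm_num) (by norm_num) (by norm_num)
      rw [exp_zero] at hc
      norm_num at hc
      linarith
    have h2 : ((S22 τ₀ + S33 τ₀)^2 + 2*exp 504*ε^2/(5/2-2))*exp (4*24) ≤ ε^2*exp 608 := by
      rw [hdiv, show (4*24:ℝ) = 96 by norm_num]
      have h4 : (S22 τ₀ + S33 τ₀)^2 + 4*exp 504*ε^2 ≤ ε^2*exp 512 := by
        nlinarith [mul_le_mul_of_nonneg_left h512 (sq_nonneg ε)]
      calc ((S22 τ₀ + S33 τ₀)^2 + 4*exp 504*ε^2)*exp 96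
          ≤ (ε^2*exp 512)*exp 96 := mul_le_mul_of_nonneg_right h4 (exp_pos _).le
        _ = ε^2*(exp 512*exp 96) := by ring
        _ = ε^2*exp 608 := by rw [← exp_add]; norm_num
    calc (S22 τ + S33 τ)^2
        ≤ ((S22 τ₀ + S33 τ₀)^2 + 2*exp 504*ε^2/(5/2-2))*exp (4*24)*exp (-2*(τ-τ₀)) := h
      _ ≤ ε^2*exp 608*exp (-2*(τ-τ₀)) := mul_le_mul_of_nonneg_right h2 (exp_pos _).le
  -- Conclusions
  intro τ hτ
  have hC2 : ∀ K : ℝ, K ≤ 2000 → exp K ≤ exp 1000*exp 1000 := by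
    intro K hK
    rw [← exp_add]
    exact exp_le_exp.2 (by linarith)
  refine ⟨?_, ?_, ?_, ?_, ?_, ?_, ?_⟩
  · -- B
    refine abs_of_sq _ _ ?_ (by positivity)
    have h := hB2dec τ hτ
    have hid : (exp 1000*ε*exp (-(τ-τ₀)/2))^2 = (exp 1000*exp 1000)*ε^2*exp (-1*(τ-τ₀)) := by
      have e2 : exp (-(τ-τ₀)/2) * exp (-(τ-τ₀)/2) = exp (-1*(τ-τ₀)) := by
        rw [← exp_add]; ring_nf
      linear_combination (ε^2*(exp (-(τ-τ₀)/2)*exp (-(τ-τ₀)/2)))*(rfl : exp (1000:ℝ)*exp 1000 = exp 1000*exp 1000)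
        + (ε^2*exp 1000*exp 1000)*e2
    rw [hid]
    have := mul_le_mul_of_nonneg_right
      (mul_le_mul_of_nonneg_right (hC2 128 (by norm_num)) (sq_nonneg ε)) (exp_pos (-1*(τ-τ₀))).le
    nlinarith [h]
  · -- S12
    refine abs_of_sq _ _ ?_ (by positivity)
    have h := hDfinal τ hτ
    have hid : (exp 1000*ε*exp (-3*(τ-τ₀)/2))^2 = (exp 1000*exp 1000)*ε^2*exp (-3*(τ-τ₀)) := by
      have e2 : exp (-3*(τ-τ₀)/2) * exp (-3*(τ-τ₀)/2) = exp (-3*(τ-τ₀)) := by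
        rw [← exp_add]; ring_nf
      linear_combination (ε^2*exp 1000*exp 1000)*e2
    rw [hid]
    have := mul_le_mul_of_nonneg_right
      (mul_le_mul_of_nonneg_right (hC2 236 (by norm_num)) (sq_nonneg ε)) (exp_pos (-3*(τ-τ₀))).le
    nlinarith [h, sq_nonneg (S13 τ), sq_nonneg (S23 τ)]
  · -- S13
    refine abs_of_sq _ _ ?_ (by positivity)
    have h := hDfinal τ hτ
    have hid : (exp 1000*ε*exp (-3*(τ-τ₀)/2))^2 = (exp 1000*exp 1000)*ε^2*exp (-3*(τ-τ₀)) := by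
      have e2 : exp (-3*(τ-τ₀)/2) * exp (-3*(τ-τ₀)/2) = exp (-3*(τ-τ₀)) := by
        rw [← exp_add]; ring_nf
      linear_combination (ε^2*exp 1000*exp 1000)*e2
    rw [hid]
    have := mul_le_mul_of_nonneg_right
      (mul_le_mul_of_nonneg_right (hC2 236 (by norm_num)) (sq_nonneg ε)) (exp_pos (-3*(τ-τ₀))).le
    nlinarith [h, sq_nonneg (S12 τ), sq_nonneg (S23 τ)]
  · -- S23
    refine abs_of_sq _ _ ?_ (by positivity)
    have h := hDfinal τ hτ
    have hid : (exp 1000*ε*exp (-3*(τ-τ₀)/2))^2 = (exp 1000*exp 1000)*ε^2*exp (-3*(τ-τ₀)) := by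
      have e2 : exp (-3*(τ-τ₀)/2) * exp (-3*(τ-τ₀)/2) = exp (-3*(τ-τ₀)) := by
        rw [← exp_add]; ring_nf
      linear_combination (ε^2*exp 1000*exp 1000)*e2
    rw [hid]
    have := mul_le_mul_of_nonneg_right
      (mul_le_mul_of_nonneg_right (hC2 236 (by norm_num)) (sq_nonneg ε)) (exp_pos (-3*(τ-τ₀))).le
    nlinarith [h, sq_nonneg (S12 τ), sq_nonneg (S13 τ)]
  · -- S22 - S33
    refine abs_of_sq _ _ ?_ (by positivity)
    have h := hXfinal τ hτ
    have hid : (exp 1000*ε*exp (-3*(τ-τ₀)/2))^2 = (exp 1000*exp 1000)*ε^2*exp (-3*(τ-τ₀)) := by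
      have e2 : exp (-3*(τ-τ₀)/2) * exp (-3*(τ-τ₀)/2) = exp (-3*(τ-τ₀)) := by
        rw [← exp_add]; ring_nf
      linear_combination (ε^2*exp 1000*exp 1000)*e2
    rw [hid]
    have := mul_le_mul_of_nonneg_right
      (mul_le_mul_of_nonneg_right (hC2 596 (by norm_num)) (sq_nonneg ε)) (exp_pos (-3*(τ-τ₀))).le
    nlinarith [h]
  · -- S22 + S33
    refine abs_of_sq _ _ ?_ (by positivity)
    have h := hYfinal τ hτ
    have hid : (exp 1000*ε*exp (-(τ-τ₀)))^2 = (exp 1000*exp 1000)*ε^2*exp (-2*(τ-τ₀)) := by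
      have e2 : exp (-(τ-τ₀)) * exp (-(τ-τ₀)) = exp (-2*(τ-τ₀)) := by
        rw [← exp_add]; ring_nf
      linear_combination (ε^2*exp 1000*exp 1000)*e2
    rw [hid]
    have := mul_le_mul_of_nonneg_right
      (mul_le_mul_of_nonneg_right (hC2 608 (by norm_num)) (sq_nonneg ε)) (exp_pos (-2*(τ-τ₀))).le
    nlinarith [h]
  · -- Phat
    have h := hPdec τ hτ
    have hcle : ε*exp 16 ≤ exp 1000*ε := by
      have h1 : exp (16:ℝ) ≤ exp 1000 := exp_le_exp.2 (by norm_num)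
      nlinarith [hε.le]
    calc P τ ≤ ε*exp 16*exp (-2*(τ-τ₀)) := h
      _ ≤ exp 1000*ε*exp (-2*(τ-τ₀)) := mul_le_mul_of_nonneg_right hcle (exp_pos _).le
end

section
/- Consider the Hubble-normalised Bianchi I Einstein–Vlasov–magnetic ODE system (see context). There exist ε₀ > 0 and C > 0 such that for every ε ∈ (0, ε₀], if |B(τ₀)| ≤ ε, |Σ₂₂(τ₀)| ≤ ε, |Σ₃₃(τ₀)| ≤ ε, |Σ₁₂(τ₀)| ≤ ε, |Σ₁₃(τ₀)| ≤ ε, |Σ₂₃(τ₀)| ≤ ε and P̂(τ₀) ≤ ε, then for all τ ≥ τ₀: |B(τ₀)|·e^{−(1/2 + Cε)(τ−τ₀)} ≤ |B(τ)| ≤ |B(τ₀)|·e^{−(1/2 − Cε)(τ−τ₀)}; in particular the decay rate e^{−τ/2} for B is optimal. -/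
open Real Set

set_option maxHeartbeats 1000000

private lemma pi_bound (x P sv p : ℝ) (hP : |P| ≤ sv) (hs : sv ≤ 3*p) : 2*x*P ≤ x^2 + 9*p^2 := by
  rcases abs_le.mp hP with ⟨h1, h2⟩
  nlinarith [sq_nonneg (x - P), mul_nonneg (by linarith : (0:ℝ) ≤ 3*p - P) (by linarith : (0:ℝ) ≤ 3*p + P)]

private lemma small_bound (x : ℝ) (h : x^2 ≤ 1/400) : x ≤ 1/20 ∧ -(1/20) ≤ x := by
  constructor <;> nlinarith [sq_nonneg (x - 1/20), sq_nonneg (x + 1/20)]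

private lemma key_ineq (a b c d e p β sv q P22 P33 P23 P12 P13 p' : ℝ)
    (hq : q = 1/2 + ((-a - b)^2 + a^2 + b^2 + 2*(d^2 + e^2 + c^2))/4 + (sv + β^2/2)/6)
    (hp : 0 ≤ p) (hs0 : 0 ≤ sv) (hs : sv ≤ 3*p)
    (hP22 : |P22| ≤ sv) (hP33 : |P33| ≤ sv) (hP23 : |P23| ≤ sv)
    (hP12 : |P12| ≤ sv) (hP13 : |P13| ≤ sv)
    (hp' : p' ≤ (-2 + 2*Real.sqrt ((-a - b)^2 + a^2 + b^2 + 2*(d^2 + e^2 + c^2))) * p)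
    (hW : a^2 + b^2 + c^2 + d^2 + e^2 + 25*p^2 + 20*β^4 ≤ (1/20)^2) :
    2*a*((q-2)*a - 2*d^2 + β^2/3 + P22)
    + 2*b*((q-2)*b - 2*e^2 + β^2/3 + P33)
    + 2*c*((q-2)*c - 2*d*e + P23)
    + 2*d*((q-2)*d + 2*d*a + d*b + e*c + P12)
    + 2*e*((q-2)*e + 2*e*b + e*a + d*c + P13)
    + 50*p*p' + 80*β^3*((q - 1 - a - b)*β) ≤ 0 := by
  have t22 := pi_bound a P22 sv p hP22 hs
  have t33 := pi_bound b P33 sv p hP33 hs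
  have t23 := pi_bound c P23 sv p hP23 hs
  have t12 := pi_bound d P12 sv p hP12 hs
  have t13 := pi_bound e P13 sv p hP13 hs
  clear hP22 hP33 hP23 hP12 hP13
  norm_num at hW
  have hE0 : (0:ℝ) ≤ a^2+b^2+c^2+d^2+e^2 := by positivity
  have hb40 : (0:ℝ) ≤ β^4 := by positivity
  have hp20 : (0:ℝ) ≤ p^2 := sq_nonneg p
  have hE : a^2+b^2+c^2+d^2+e^2 ≤ 1/400 := by linarith
  have hp2 : p^2 ≤ 1/10000 := by linarith
  have hpu : p ≤ 1/100 := by nlinarith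
  have hb4 : β^4 ≤ 1/8000 := by linarith
  have hb2 : β^2 ≤ 1/80 := by nlinarith [sq_nonneg β, sq_nonneg (β^2 - 1/80)]
  clear hW
  have hFle : (-a - b)^2 + a^2 + b^2 + 2*(d^2 + e^2 + c^2) ≤ 1/100 := by
    nlinarith [sq_nonneg (a-b), sq_nonneg c, sq_nonneg d, sq_nonneg e]
  have hsqF : Real.sqrt ((-a - b)^2 + a^2 + b^2 + 2*(d^2 + e^2 + c^2)) ≤ 1/10 := by
    rw [show (1/10 : ℝ) = Real.sqrt ((1/10)^2) from (Real.sqrt_sq (by norm_num)).symm]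
    exact Real.sqrt_le_sqrt (by linarith)
  have ha := small_bound a (by linarith [sq_nonneg b, sq_nonneg c, sq_nonneg d, sq_nonneg e])
  have hb := small_bound b (by linarith [sq_nonneg a, sq_nonneg c, sq_nonneg d, sq_nonneg e])
  have hsu : sv ≤ 3/100 := by linarith
  have hq2 : q - 2 ≤ -149/100 := by rw [hq]; linarith
  have hq1 : q - 1 - a - b ≤ -39/100 := by rw [hq]; linarith [ha.2, hb.2]
  have h50 : 50*p*p' ≤ -90*p^2 := by
    have h1 : 50*p*p' ≤ 50*p*((-2 + 2*Real.sqrt ((-a - b)^2 + a^2 + b^2 + 2*(d^2 + e^2 + c^2)))*p) :=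
      mul_le_mul_of_nonneg_left hp' (by linarith)
    nlinarith [mul_nonneg (sub_nonneg.2 hsqF) hp20]
  clear hq hp' hsqF hFle
  have tc : 2*(b*d^2 + a*e^2) ≤ (1/10)*(a^2+b^2+c^2+d^2+e^2) := by
    nlinarith [mul_nonneg (by linarith [hb.1] : (0:ℝ) ≤ 1/20 - b) (sq_nonneg d),
      mul_nonneg (by linarith [ha.1] : (0:ℝ) ≤ 1/20 - a) (sq_nonneg e),
      sq_nonneg a, sq_nonneg b, sq_nonneg c, sq_nonneg d, sq_nonneg e]
  have tβ : (2*a + 2*b)*β^2/3 ≤ (a^2 + b^2)/3 + (2/3)*β^4 := by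
    nlinarith [sq_nonneg (a - β^2), sq_nonneg (b - β^2)]
  have hA : 2*(q-2)*(a^2+b^2+c^2+d^2+e^2) ≤ -(298/100)*(a^2+b^2+c^2+d^2+e^2) := by
    nlinarith [mul_nonneg (by linarith : (0:ℝ) ≤ -149/100 - (q-2)) hE0]
  have hB : 80*(q - 1 - a - b)*β^4 ≤ -31*β^4 := by
    nlinarith [mul_nonneg (by linarith : (0:ℝ) ≤ -39/100 - (q-1-a-b)) hb40]
  have hid : 2*a*((q-2)*a - 2*d^2 + β^2/3 + P22)
    + 2*b*((q-2)*b - 2*e^2 + β^2/3 + P33)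
    + 2*c*((q-2)*c - 2*d*e + P23)
    + 2*d*((q-2)*d + 2*d*a + d*b + e*c + P12)
    + 2*e*((q-2)*e + 2*e*b + e*a + d*c + P13)
    + 50*p*p' + 80*β^3*((q - 1 - a - b)*β)
    = 2*(q-2)*(a^2+b^2+c^2+d^2+e^2) + (2*a + 2*b)*β^2/3 + 2*(b*d^2 + a*e^2)
      + (2*a*P22 + 2*b*P33 + 2*c*P23 + 2*d*P12 + 2*e*P13)
      + 50*p*p' + 80*(q - 1 - a - b)*β^4 := by ring
  rw [hid]
  have hsq : a^2 + b^2 ≤ a^2+b^2+c^2+d^2+e^2 := by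
    linarith [sq_nonneg c, sq_nonneg d, sq_nonneg e]
  linarith

private lemma eight_eps_bound (x ε : ℝ) (hε : 0 < ε) (h : x^2 ≤ 50*ε^2) :
    x ≤ 8*ε ∧ -(8*ε) ≤ x := by
  constructor <;> nlinarith [sq_nonneg (x - 8*ε), sq_nonneg (x + 8*ε), sq_nonneg ε]

private lemma g_bounds (a b c d e p β sv ε : ℝ) (hε : 0 < ε) (hε' : ε ≤ 1/200)
    (hp : 0 ≤ p) (hs0 : 0 ≤ sv) (hs : sv ≤ 3*p)
    (hW : a^2 + b^2 + c^2 + d^2 + e^2 + 25*p^2 + 20*β^4 ≤ 50*ε^2) :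
    -(20*ε) ≤ ((-a - b)^2 + a^2 + b^2 + 2*(d^2 + e^2 + c^2))/4 + (sv + β^2/2)/6 - a - b ∧
    ((-a - b)^2 + a^2 + b^2 + 2*(d^2 + e^2 + c^2))/4 + (sv + β^2/2)/6 - a - b ≤ 20*ε := by
  have hp20 : (0:ℝ) ≤ p^2 := sq_nonneg p
  have hb40 : (0:ℝ) ≤ β^4 := by positivity
  have hsq : (0:ℝ) ≤ a^2 + b^2 + c^2 + d^2 + e^2 := by positivity
  have ha := eight_eps_bound a ε hε (by nlinarith [sq_nonneg b, sq_nonneg c, sq_nonneg d, sq_nonneg e])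
  have hb := eight_eps_bound b ε hε (by nlinarith [sq_nonneg a, sq_nonneg c, sq_nonneg d, sq_nonneg e])
  have hpε : p ≤ 2*ε := by nlinarith [sq_nonneg (p - 2*ε)]
  have hβε : β^2 ≤ 2*ε := by nlinarith [sq_nonneg (β^2 - 2*ε), sq_nonneg β]
  have hF0 : (0:ℝ) ≤ (-a - b)^2 + a^2 + b^2 + 2*(d^2 + e^2 + c^2) := by positivity
  have hFle : (-a - b)^2 + a^2 + b^2 + 2*(d^2 + e^2 + c^2) ≤ 150*ε^2 := by
    nlinarith [sq_nonneg (a-b), sq_nonneg c, sq_nonneg d, sq_nonneg e]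
  have hε2 : ε^2 ≤ ε/200 := by nlinarith
  constructor
  · nlinarith [ha.1, hb.1]
  · nlinarith [ha.2, hb.2]

/-- Two-sided small-data decay estimate for the Hubble-normalised magnetic
field `B` in the Bianchi I Einstein–Vlasov system with a pure magnetic field:
the decay rate `e^{-τ/2}` is optimal. -/
theorem bianchiI_magnetic_field_optimal_decay :
    ∃ ε₀ > (0 : ℝ), ∃ C > (0 : ℝ),
      ∀ (τ₀ : ℝ) (B S22 S33 S12 S13 S23 Phat Phat' s P22 P33 P23 P12 P13 : ℝ → ℝ),
      -- continuity of the normalised kinetic stresses and of the derivative of P̂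
      ContinuousOn s (Ici τ₀) → ContinuousOn P22 (Ici τ₀) → ContinuousOn P33 (Ici τ₀) →
      ContinuousOn P23 (Ici τ₀) → ContinuousOn P12 (Ici τ₀) → ContinuousOn P13 (Ici τ₀) →
      ContinuousOn Phat' (Ici τ₀) →
      -- the evolution equations
      (∀ τ ∈ Ici τ₀, HasDerivAt B
        ((decelParam B S22 S33 S12 S13 S23 s τ - 1 - S22 τ - S33 τ) * B τ) τ) →
      (∀ τ ∈ Ici τ₀, HasDerivAt S22
        ((decelParam B S22 S33 S12 S13 S23 s τ - 2) * S22 τ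
          - 2 * (S12 τ) ^ 2 + (B τ) ^ 2 / 3 + P22 τ) τ) →
      (∀ τ ∈ Ici τ₀, HasDerivAt S33
        ((decelParam B S22 S33 S12 S13 S23 s τ - 2) * S33 τ
          - 2 * (S13 τ) ^ 2 + (B τ) ^ 2 / 3 + P33 τ) τ) →
      (∀ τ ∈ Ici τ₀, HasDerivAt S23
        ((decelParam B S22 S33 S12 S13 S23 s τ - 2) * S23 τ
          - 2 * S12 τ * S13 τ + P23 τ) τ) →
      (∀ τ ∈ Ici τ₀, HasDerivAt S12
        ((decelParam B S22 S33 S12 S13 S23 s τ - 2) * S12 τ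
          + 2 * S12 τ * S22 τ + S12 τ * S33 τ + S13 τ * S23 τ + P12 τ) τ) →
      (∀ τ ∈ Ici τ₀, HasDerivAt S13
        ((decelParam B S22 S33 S12 S13 S23 s τ - 2) * S13 τ
          + 2 * S13 τ * S33 τ + S13 τ * S22 τ + S12 τ * S23 τ + P13 τ) τ) →
      (∀ τ ∈ Ici τ₀, HasDerivAt Phat (Phat' τ) τ) →
      (∀ τ ∈ Ici τ₀, Phat' τ ≤
        (-2 + 2 * Real.sqrt (shearScalar S22 S33 S12 S13 S23 τ)) * Phat τ) →
      -- positivity and energy conditions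
      (∀ τ ∈ Ici τ₀, 0 ≤ Phat τ) →
      (∀ τ ∈ Ici τ₀, 0 ≤ s τ) →
      (∀ τ ∈ Ici τ₀, s τ ≤ 3 * Phat τ) →
      (∀ τ ∈ Ici τ₀, |P22 τ| ≤ s τ) →
      (∀ τ ∈ Ici τ₀, |P33 τ| ≤ s τ) →
      (∀ τ ∈ Ici τ₀, |P23 τ| ≤ s τ) →
      (∀ τ ∈ Ici τ₀, |P12 τ| ≤ s τ) →
      (∀ τ ∈ Ici τ₀, |P13 τ| ≤ s τ) →
      -- the Hamiltonian constraint bound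
      (∀ τ ∈ Ici τ₀, (B τ) ^ 2 / 2 + shearScalar S22 S33 S12 S13 S23 τ / 2 ≤ 3) →
      -- small data
      ∀ ε : ℝ, 0 < ε → ε ≤ ε₀ →
      |B τ₀| ≤ ε → |S22 τ₀| ≤ ε → |S33 τ₀| ≤ ε →
      |S12 τ₀| ≤ ε → |S13 τ₀| ≤ ε → |S23 τ₀| ≤ ε → Phat τ₀ ≤ ε →
      -- conclusion: two-sided (optimal) bounds on the magnetic field
      ∀ τ ∈ Ici τ₀,
        |B τ₀| * Real.exp (-(1 / 2 + C * ε) * (τ - τ₀)) ≤ |B τ| ∧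
        |B τ| ≤ |B τ₀| * Real.exp (-(1 / 2 - C * ε) * (τ - τ₀)) := by
  refine ⟨1/200, by norm_num, 20, by norm_num, ?_⟩
  intro τ₀ B S22 S33 S12 S13 S23 Phat Phat' s P22 P33 P23 P12 P13
  intro _hcs _hc22 _hc33 _hc23 _hc12 _hc13 _hcp'
  intro hdB hd22 hd33 hd23 hd12 hd13 hdP hPle hP0 hs0 hs3 hb22 hb33 hb23 hb12 hb13 _hham
  intro ε hε hεε₀ hB0 h220 h330 h120 h130 h230 hPh0
  set W : ℝ → ℝ := fun t => (S22 t)^2 + (S33 t)^2 + (S23 t)^2 + (S12 t)^2 + (S13 t)^2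
      + 25*(Phat t)^2 + 20*(B t)^4 with hWdef
  set DW : ℝ → ℝ := fun τ =>
      2*S22 τ*((decelParam B S22 S33 S12 S13 S23 s τ - 2)*S22 τ - 2*(S12 τ)^2 + (B τ)^2/3 + P22 τ)
    + 2*S33 τ*((decelParam B S22 S33 S12 S13 S23 s τ - 2)*S33 τ - 2*(S13 τ)^2 + (B τ)^2/3 + P33 τ)
    + 2*S23 τ*((decelParam B S22 S33 S12 S13 S23 s τ - 2)*S23 τ - 2*S12 τ*S13 τ + P23 τ)
    + 2*S12 τ*((decelParam B S22 S33 S12 S13 S23 s τ - 2)*S12 τ + 2*S12 τ*S22 τ + S12 τ*S33 τ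
        + S13 τ*S23 τ + P12 τ)
    + 2*S13 τ*((decelParam B S22 S33 S12 S13 S23 s τ - 2)*S13 τ + 2*S13 τ*S33 τ + S13 τ*S22 τ
        + S12 τ*S23 τ + P13 τ)
    + 50*Phat τ*Phat' τ
    + 80*(B τ)^3*((decelParam B S22 S33 S12 S13 S23 s τ - 1 - S22 τ - S33 τ)*B τ) with hDWdef
  have hWd : ∀ τ ∈ Ici τ₀, HasDerivAt W (DW τ) τ := by
    intro τ hτ
    have h := (((((((hd22 τ hτ).pow 2).add ((hd33 τ hτ).pow 2)).add ((hd23 τ hτ).pow 2)).add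
        ((hd12 τ hτ).pow 2)).add ((hd13 τ hτ).pow 2)).add
        (((hdP τ hτ).pow 2).const_mul (25:ℝ))).add (((hdB τ hτ).pow 4).const_mul (20:ℝ))
    rw [hWdef, hDWdef]
    refine h.congr_deriv ?_
    simp only [Pi.pow_apply]
    push_cast
    ring
  have hkey : ∀ τ ∈ Ici τ₀, W τ ≤ (1/20)^2 → DW τ ≤ 0 := by
    intro τ hτ hWτ
    rw [hDWdef]
    have hWτ' : (S22 τ)^2 + (S33 τ)^2 + (S23 τ)^2 + (S12 τ)^2 + (S13 τ)^2
        + 25*(Phat τ)^2 + 20*(B τ)^4 ≤ (1/20)^2 := by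
      rw [hWdef] at hWτ; exact hWτ
    exact key_ineq (S22 τ) (S33 τ) (S23 τ) (S12 τ) (S13 τ) (Phat τ) (B τ) (s τ)
      (decelParam B S22 S33 S12 S13 S23 s τ) (P22 τ) (P33 τ) (P23 τ) (P12 τ) (P13 τ) (Phat' τ)
      (by simp only [decelParam, shearScalar])
      (hP0 τ hτ) (hs0 τ hτ) (hs3 τ hτ) (hb22 τ hτ) (hb33 τ hτ) (hb23 τ hτ)
      (hb12 τ hτ) (hb13 τ hτ) (by simpa only [shearScalar] using hPle τ hτ) hWτ'
  have hWc : ∀ x ∈ Ici τ₀, ContinuousAt W x := fun x hx => (hWd x hx).continuousAt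
  have hW0 : W τ₀ ≤ 50*ε^2 := by
    obtain ⟨hB1, hB2⟩ := abs_le.mp hB0
    obtain ⟨h221, h222⟩ := abs_le.mp h220
    obtain ⟨h331, h332⟩ := abs_le.mp h330
    obtain ⟨h121, h122⟩ := abs_le.mp h120
    obtain ⟨h131, h132⟩ := abs_le.mp h130
    obtain ⟨h231, h232⟩ := abs_le.mp h230
    have e1 : (S22 τ₀)^2 ≤ ε^2 := by nlinarith
    have e2 : (S33 τ₀)^2 ≤ ε^2 := by nlinarith
    have e3 : (S23 τ₀)^2 ≤ ε^2 := by nlinarith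
    have e4 : (S12 τ₀)^2 ≤ ε^2 := by nlinarith
    have e5 : (S13 τ₀)^2 ≤ ε^2 := by nlinarith
    have e6 : (Phat τ₀)^2 ≤ ε^2 := by nlinarith [hP0 τ₀ (le_refl τ₀)]
    have e7 : (B τ₀)^2 ≤ ε^2 := by nlinarith
    have e8 : (B τ₀)^4 ≤ ε^4 := by nlinarith [sq_nonneg (B τ₀)]
    have hε1 : ε^2 ≤ 1 := by nlinarith
    have e9 : ε^4 ≤ ε^2 := by nlinarith [mul_le_mul_of_nonneg_left hε1 (sq_nonneg ε)]
    show (S22 τ₀)^2 + (S33 τ₀)^2 + (S23 τ₀)^2 + (S12 τ₀)^2 + (S13 τ₀)^2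
      + 25*(Phat τ₀)^2 + 20*(B τ₀)^4 ≤ 50*ε^2
    linarith
  have hboot : ∀ τ₁ ∈ Ici τ₀, W τ₁ ≤ 50*ε^2 := by
    intro τ₁ hτ₁
    have h50lt : 50*ε^2 < (1/20)^2 := by nlinarith
    have hsub : Icc τ₀ τ₁ ⊆ Icc τ₀ τ₁ ∩ W ⁻¹' (Iic (50*ε^2)) := by
      apply IsClosed.Icc_subset_of_forall_mem_nhdsWithin
      · rw [inter_eq_self_of_subset_left inter_subset_left]
        exact ContinuousOn.preimage_isClosed_of_isClosed
          (fun x hx => (hWc x hx.1).continuousWithinAt) isClosed_Icc isClosed_Iic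
      · exact ⟨left_mem_Icc.2 hτ₁, by simpa using hW0⟩
      · rintro x ⟨⟨⟨hx0, _⟩, hxW⟩, hxIco⟩
        have hxW' : W x ≤ 50*ε^2 := hxW
        have hx1 : x < τ₁ := hxIco.2
        have hsmall : W x < (1/20)^2 := lt_of_le_of_lt hxW' h50lt
        obtain ⟨η, hη0, hball⟩ := Metric.mem_nhds_iff.mp
          ((hWc x hx0).preimage_mem_nhds (Iio_mem_nhds hsmall))
        set m := min (x + η/2) τ₁ with hm
        have hxm : x < m := lt_min (by linarith) hx1
        have hIccsub : Icc x m ⊆ Ici τ₀ := fun z hz => le_trans hx0 hz.1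
        have hball' : ∀ z ∈ Icc x m, W z < (1/20)^2 := by
          intro z hz
          have h1 : z ≤ x + η/2 := le_trans hz.2 (min_le_left _ _)
          have h2 : x ≤ z := hz.1
          have : z ∈ Metric.ball x η := by
            rw [Metric.mem_ball, Real.dist_eq, abs_lt]
            constructor <;> linarith
          exact hball this
        have hanti : AntitoneOn W (Icc x m) := by
          apply antitoneOn_of_deriv_nonpos (convex_Icc x m)
          · exact fun z hz => (hWc z (hIccsub hz)).continuousWithinAt
          · intro z hz
            rw [interior_Icc] at hz
            exact (hWd z (hIccsub (Ioo_subset_Icc_self hz))).differentiableAt.differentiableWithinAt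
          · intro z hz
            rw [interior_Icc] at hz
            have hz' : z ∈ Ici τ₀ := hIccsub (Ioo_subset_Icc_self hz)
            rw [(hWd z hz').deriv]
            exact hkey z hz' (le_of_lt (hball' z (Ioo_subset_Icc_self hz)))
        apply Filter.mem_of_superset (Ioc_mem_nhdsGT hxm)
        rintro y ⟨hy1, hy2⟩
        refine ⟨⟨le_trans hx0 hy1.le, le_trans hy2 (min_le_right _ _)⟩, ?_⟩
        have hWy : W y ≤ W x := hanti (left_mem_Icc.2 hxm.le) ⟨hy1.le, hy2⟩ hy1.le
        simpa using le_trans hWy hxW'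
    exact (hsub (right_mem_Icc.2 hτ₁)).2
  have hg : ∀ τ ∈ Ici τ₀,
      -(1/2) - 20*ε ≤ decelParam B S22 S33 S12 S13 S23 s τ - 1 - S22 τ - S33 τ ∧
      decelParam B S22 S33 S12 S13 S23 s τ - 1 - S22 τ - S33 τ ≤ -(1/2) + 20*ε := by
    intro τ hτ
    have hWτ : (S22 τ)^2 + (S33 τ)^2 + (S23 τ)^2 + (S12 τ)^2 + (S13 τ)^2
        + 25*(Phat τ)^2 + 20*(B τ)^4 ≤ 50*ε^2 := by
      have := hboot τ hτ; rw [hWdef] at this; exact this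
    have h := g_bounds (S22 τ) (S33 τ) (S23 τ) (S12 τ) (S13 τ) (Phat τ) (B τ) (s τ) ε
      hε hεε₀ (hP0 τ hτ) (hs0 τ hτ) (hs3 τ hτ) hWτ
    simp only [decelParam, shearScalar]
    constructor
    · linarith [h.1]
    · linarith [h.2]
  -- lower bound function
  have final : ∀ τ ∈ Ici τ₀,
      |B τ₀| * Real.exp (-(1/2 + 20*ε) * (τ - τ₀)) ≤ |B τ| ∧
      |B τ| ≤ |B τ₀| * Real.exp (-(1/2 - 20*ε) * (τ - τ₀)) := by
    have hLd : ∀ (r : ℝ) (τ : ℝ), τ ∈ Ici τ₀ → HasDerivAt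
        (fun t => (B t)^2 * Real.exp (r * (t - τ₀)))
        ((2*(decelParam B S22 S33 S12 S13 S23 s τ - 1 - S22 τ - S33 τ) + r)
          * ((B τ)^2 * Real.exp (r * (τ - τ₀)))) τ := by
      intro r τ hτ
      have h := ((hdB τ hτ).pow 2).mul ((((hasDerivAt_id τ).sub_const τ₀).const_mul r).exp)
      simp only [id_eq] at h
      refine h.congr_deriv ?_
      simp only [Pi.pow_apply]
      push_cast
      ring
    intro τ hτ
    constructor
    · -- lower bound
      have hmono : MonotoneOn (fun t => (B t)^2 * Real.exp ((1 + 40*ε) * (t - τ₀))) (Ici τ₀) := by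
        apply monotoneOn_of_deriv_nonneg (convex_Ici τ₀)
        · exact fun z hz => (hLd _ z hz).continuousAt.continuousWithinAt
        · intro z hz
          rw [interior_Ici] at hz
          exact (hLd _ z (mem_Ici.mpr hz.le)).differentiableAt.differentiableWithinAt
        · intro z hz
          rw [interior_Ici] at hz
          rw [(hLd _ z (mem_Ici.mpr hz.le)).deriv]
          have h1 := (hg z (mem_Ici.mpr hz.le)).1
          have h2 : (0:ℝ) ≤ 2*(decelParam B S22 S33 S12 S13 S23 s z - 1 - S22 z - S33 z)
              + (1 + 40*ε) := by linarith
          exact mul_nonneg h2 (by positivity)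
      have hL := hmono self_mem_Ici hτ hτ
      simp only [sub_self, mul_zero, Real.exp_zero, mul_one] at hL
      -- hL : (B τ₀)^2 ≤ (B τ)^2 * exp ((1+40ε)(τ-τ₀))
      have hsq : (|B τ₀| * Real.exp (-(1/2 + 20*ε) * (τ - τ₀)))^2 ≤ |B τ|^2 := by
        have he2 : (Real.exp (-(1/2 + 20*ε) * (τ - τ₀)))^2
            = Real.exp (-((1 + 40*ε) * (τ - τ₀))) := by
          rw [sq, ← Real.exp_add]; ring_nf
        have hprod : Real.exp ((1 + 40*ε) * (τ - τ₀)) * Real.exp (-((1 + 40*ε) * (τ - τ₀)))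
            = 1 := by rw [← Real.exp_add]; simp
        have := mul_le_mul_of_nonneg_right hL (Real.exp_pos (-((1 + 40*ε) * (τ - τ₀)))).le
        rw [mul_pow, sq_abs, sq_abs, he2]
        calc (B τ₀)^2 * Real.exp (-((1 + 40*ε) * (τ - τ₀)))
            ≤ (B τ)^2 * Real.exp ((1 + 40*ε) * (τ - τ₀))
              * Real.exp (-((1 + 40*ε) * (τ - τ₀))) := this
          _ = (B τ)^2 := by rw [mul_assoc, hprod, mul_one]
      exact le_of_pow_le_pow_left₀ two_ne_zero (abs_nonneg _) hsq
    · -- upper bound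
      have hanti : AntitoneOn (fun t => (B t)^2 * Real.exp ((1 - 40*ε) * (t - τ₀))) (Ici τ₀) := by
        apply antitoneOn_of_deriv_nonpos (convex_Ici τ₀)
        · exact fun z hz => (hLd _ z hz).continuousAt.continuousWithinAt
        · intro z hz
          rw [interior_Ici] at hz
          exact (hLd _ z (mem_Ici.mpr hz.le)).differentiableAt.differentiableWithinAt
        · intro z hz
          rw [interior_Ici] at hz
          rw [(hLd _ z (mem_Ici.mpr hz.le)).deriv]
          have h1 := (hg z (mem_Ici.mpr hz.le)).2
          have h2 : 2*(decelParam B S22 S33 S12 S13 S23 s z - 1 - S22 z - S33 z)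
              + (1 - 40*ε) ≤ 0 := by linarith
          have h3 : (0:ℝ) ≤ (B z)^2 * Real.exp ((1 - 40*ε) * (z - τ₀)) := by positivity
          nlinarith [mul_nonneg (neg_nonneg.2 h2) h3]
      have hU := hanti self_mem_Ici hτ hτ
      simp only [sub_self, mul_zero, Real.exp_zero, mul_one] at hU
      -- hU : (B τ)^2 * exp ((1-40ε)(τ-τ₀)) ≤ (B τ₀)^2
      have hsq : |B τ|^2 ≤ (|B τ₀| * Real.exp (-(1/2 - 20*ε) * (τ - τ₀)))^2 := by
        have he2 : (Real.exp (-(1/2 - 20*ε) * (τ - τ₀)))^2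
            = Real.exp (-((1 - 40*ε) * (τ - τ₀))) := by
          rw [sq, ← Real.exp_add]; ring_nf
        have hprod : Real.exp ((1 - 40*ε) * (τ - τ₀)) * Real.exp (-((1 - 40*ε) * (τ - τ₀)))
            = 1 := by rw [← Real.exp_add]; simp
        have := mul_le_mul_of_nonneg_right hU (Real.exp_pos (-((1 - 40*ε) * (τ - τ₀)))).le
        rw [mul_pow, sq_abs, sq_abs, he2]
        calc (B τ)^2 = (B τ)^2 * (Real.exp ((1 - 40*ε) * (τ - τ₀))
              * Real.exp (-((1 - 40*ε) * (τ - τ₀)))) := by rw [hprod, mul_one]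
          _ = (B τ)^2 * Real.exp ((1 - 40*ε) * (τ - τ₀))
              * Real.exp (-((1 - 40*ε) * (τ - τ₀))) := by ring
          _ ≤ (B τ₀)^2 * Real.exp (-((1 - 40*ε) * (τ - τ₀))) := this
      exact le_of_pow_le_pow_left₀ two_ne_zero (by positivity) hsq
  intro τ hτ
  obtain ⟨hlo, hhi⟩ := final τ hτ
  constructor
  · convert hlo using 4 <;> ring
  · convert hhi using 4 <;> ring
end

section
/- Let t₀ > 0, K ≥ 0, and let H : [t₀,∞) → (0,∞) be continuously differentiable with H(t₀) = 2/(3t₀), and suppose there is a continuous function r : [t₀,∞) → ℝ with 0 ≤ r(t) ≤ K·t^{−2/3} such that −H'(t)/H(t)² = 3/2 + r(t) for all t ≥ t₀. Then for all t ≥ t₀: |H(t) − (2/3)·t^{−1}| ≤ (4/3)·K·t^{−5/3}. -/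
open Real Set

/-- Dust-like asymptotics of the Hubble scalar: if `-H'/H² = 3/2 + r` with
`0 ≤ r(t) ≤ K·t^{-2/3}` and `H(t₀) = 2/(3t₀)`, then
`|H(t) - (2/3)t⁻¹| ≤ (4/3)·K·t^{-5/3}`. -/
theorem hubble_dust_asymptotics
    (t₀ K : ℝ) (ht₀ : 0 < t₀) (hK : 0 ≤ K)
    (H H' r : ℝ → ℝ)
    (hH_pos : ∀ t ∈ Ici t₀, 0 < H t)
    (hH_deriv : ∀ t ∈ Ici t₀, HasDerivAt H (H' t) t)
    (hH'_cont : ContinuousOn H' (Ici t₀))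
    (hr_cont : ContinuousOn r (Ici t₀))
    (hr_nonneg : ∀ t ∈ Ici t₀, 0 ≤ r t)
    (hr_bound : ∀ t ∈ Ici t₀, r t ≤ K * t ^ (-(2 : ℝ) / 3))
    (hH_init : H t₀ = 2 / (3 * t₀))
    (hray : ∀ t ∈ Ici t₀, -(H' t) / (H t) ^ 2 = 3 / 2 + r t) :
    ∀ t ∈ Ici t₀, |H t - 2 / 3 * t⁻¹| ≤ 4 / 3 * K * t ^ (-(5 : ℝ) / 3) := by
  -- derivative of u = H⁻¹ is 3/2 + r
  have hu_deriv : ∀ s ∈ Ici t₀, HasDerivAt (fun x => (H x)⁻¹) (3 / 2 + r s) s := by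
    intro s hs
    have h1 := (hH_deriv s hs).inv (hH_pos s hs).ne'
    have h2 : -(H' s) / (H s) ^ 2 = 3 / 2 + r s := hray s hs
    refine h1.congr_deriv ?_
    rw [← h2]
  -- part 1: v = u - (3/2) t is monotone
  have hlin : ∀ s : ℝ, HasDerivAt (fun x : ℝ => 3 / 2 * x) (3 / 2) s := by
    intro s
    simpa using (hasDerivAt_id s).const_mul (3 / 2 : ℝ)
  have hv_deriv : ∀ s ∈ Ici t₀,
      HasDerivAt (fun x => (H x)⁻¹ - 3 / 2 * x) (r s) s := by
    intro s hs
    have := (hu_deriv s hs).sub (hlin s)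
    refine this.congr_deriv ?_
    ring
  have hv_mono : MonotoneOn (fun x => (H x)⁻¹ - 3 / 2 * x) (Ici t₀) := by
    apply monotoneOn_of_deriv_nonneg (convex_Ici t₀)
    · intro s hs
      exact (hv_deriv s hs).continuousAt.continuousWithinAt
    · intro s hs
      rw [interior_Ici] at hs
      exact (hv_deriv s (mem_Ici.mpr (mem_Ioi.mp hs).le)).differentiableAt.differentiableWithinAt
    · intro s hs
      rw [interior_Ici] at hs
      rw [(hv_deriv s (mem_Ici.mpr (mem_Ioi.mp hs).le)).deriv]
      exact hr_nonneg s (mem_Ici.mpr (mem_Ioi.mp hs).le)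
  -- part 2: w = u - (3/2) t - 3 K t^{1/3} is antitone
  have hpow_deriv : ∀ s ∈ Ici t₀,
      HasDerivAt (fun x : ℝ => 3 * K * x ^ ((1 : ℝ) / 3)) (K * s ^ (-(2 : ℝ) / 3)) s := by
    intro s hs
    have hs0 : s ≠ 0 := (lt_of_lt_of_le ht₀ hs).ne'
    have := (Real.hasDerivAt_rpow_const (x := s) (p := (1 : ℝ) / 3) (Or.inl hs0)).const_mul
      (3 * K)
    refine this.congr_deriv ?_
    have : (1 : ℝ) / 3 - 1 = -(2 : ℝ) / 3 := by norm_num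
    rw [← this]
    ring
  have hw_deriv : ∀ s ∈ Ici t₀,
      HasDerivAt (fun x => (H x)⁻¹ - 3 / 2 * x - 3 * K * x ^ ((1 : ℝ) / 3))
        (r s - K * s ^ (-(2 : ℝ) / 3)) s := by
    intro s hs
    exact (hv_deriv s hs).sub (hpow_deriv s hs)
  have hw_anti : AntitoneOn (fun x => (H x)⁻¹ - 3 / 2 * x - 3 * K * x ^ ((1 : ℝ) / 3))
      (Ici t₀) := by
    apply antitoneOn_of_deriv_nonpos (convex_Ici t₀)
    · intro s hs
      exact (hw_deriv s hs).continuousAt.continuousWithinAt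
    · intro s hs
      rw [interior_Ici] at hs
      exact (hw_deriv s (mem_Ici.mpr (mem_Ioi.mp hs).le)).differentiableAt.differentiableWithinAt
    · intro s hs
      rw [interior_Ici] at hs
      rw [(hw_deriv s (mem_Ici.mpr (mem_Ioi.mp hs).le)).deriv]
      have := hr_bound s (mem_Ici.mpr (mem_Ioi.mp hs).le)
      linarith
  -- now the main estimate
  intro t ht
  have ht0t : t₀ ≤ t := ht
  have htpos : 0 < t := lt_of_lt_of_le ht₀ ht0t
  have hHt : 0 < H t := hH_pos t ht
  have hUpos : 0 < (H t)⁻¹ := inv_pos.mpr hHt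
  set U : ℝ := (H t)⁻¹ with hU
  have hu0 : (H t₀)⁻¹ = 3 / 2 * t₀ := by
    rw [hH_init]
    field_simp
  -- lower bound : 3/2 t ≤ U
  have hul : 3 / 2 * t ≤ U := by
    have := hv_mono (self_mem_Ici) ht ht0t
    simp only [hu0] at this
    simpa using this
  -- upper bound : U ≤ 3/2 t + 3 K t^{1/3}
  have hT13 : (0 : ℝ) < t ^ ((1 : ℝ) / 3) := Real.rpow_pos_of_pos htpos _
  have hT013 : (0 : ℝ) ≤ t₀ ^ ((1 : ℝ) / 3) := (Real.rpow_pos_of_pos ht₀ _).le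
  have hur : U ≤ 3 / 2 * t + 3 * K * t ^ ((1 : ℝ) / 3) := by
    have h := hw_anti (self_mem_Ici) ht ht0t
    simp only [hu0] at h
    have hK3 : 0 ≤ 3 * K * t₀ ^ ((1 : ℝ) / 3) := by positivity
    have : U - 3 / 2 * t - 3 * K * t ^ ((1 : ℝ) / 3) ≤ - (3 * K * t₀ ^ ((1 : ℝ) / 3)) := by
      simpa using h
    linarith
  -- H t = U⁻¹
  have hHU : H t = U⁻¹ := by rw [hU, inv_inv]
  have hUt : 0 < U := hUpos
  -- |U⁻¹ - 2/3 t⁻¹| = 2/3 t⁻¹ - U⁻¹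
  have hle : U⁻¹ ≤ 2 / 3 * t⁻¹ := by
    have h32 : 0 < 3 / 2 * t := by positivity
    have := inv_anti₀ h32 hul
    calc U⁻¹ ≤ (3 / 2 * t)⁻¹ := this
      _ = 2 / 3 * t⁻¹ := by field_simp
  have habs : |H t - 2 / 3 * t⁻¹| = 2 / 3 * t⁻¹ - U⁻¹ := by
    rw [hHU, abs_of_nonpos (by linarith)]
    ring
  rw [habs]
  -- algebra
  have h1 : 2 / 3 * t⁻¹ - U⁻¹ = (2 * U - 3 * t) / (3 * t * U) := by
    field_simp
  have h2 : (2 * U - 3 * t) / (3 * t * U) ≤ (6 * K * t ^ ((1 : ℝ) / 3)) / ((9 / 2) * t ^ 2) := by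
    apply div_le_div₀ (by positivity) (by linarith) (by positivity)
    nlinarith [hul, htpos]
  have h3 : (6 * K * t ^ ((1 : ℝ) / 3)) / ((9 / 2) * t ^ 2) = 4 / 3 * K * t ^ (-(5 : ℝ) / 3) := by
    have he : (-(5 : ℝ) / 3) = (1 : ℝ) / 3 - 2 := by norm_num
    rw [he, Real.rpow_sub htpos, Real.rpow_two]
    field_simp
    ring
  rw [h1, ← h3]
  exact h2
end

section
/- Let a > 0, t₀ ∈ ℝ, and let H : [t₀,∞) → ℝ be continuously differentiable with H(t) ≥ a and H'(t) ≤ −H(t)² + a² for all t ≥ t₀. Then for all t ≥ t₀: H(t) − a ≤ (H(t₀) − a)·e^{−2a(t−t₀)}. -/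
open Real Set

/-- ODE comparison for de Sitter-like asymptotics: if `H ≥ a` and
`H' ≤ -H² + a²`, then `H` converges to `a` exponentially at rate `2a`. -/
theorem de_sitter_ode_comparison
    (a t₀ : ℝ) (ha : 0 < a)
    (H H' : ℝ → ℝ)
    (hH_deriv : ∀ t ∈ Ici t₀, HasDerivAt H (H' t) t)
    (hH'_cont : ContinuousOn H' (Ici t₀))
    (hH_lower : ∀ t ∈ Ici t₀, a ≤ H t)
    (hH_ineq : ∀ t ∈ Ici t₀, H' t ≤ -(H t) ^ 2 + a ^ 2) :
    ∀ t ∈ Ici t₀, H t - a ≤ (H t₀ - a) * Real.exp (-2 * a * (t - t₀)) := by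
  set g : ℝ → ℝ := fun t => (H t - a) * Real.exp (2 * a * (t - t₀)) with hg
  have hgd : ∀ t ∈ Ici t₀, HasDerivAt g
      ((H' t + 2 * a * (H t - a)) * Real.exp (2 * a * (t - t₀))) t := by
    intro t ht
    have h1 : HasDerivAt (fun t => H t - a) (H' t) t := (hH_deriv t ht).sub_const a
    have h2 : HasDerivAt (fun t => Real.exp (2 * a * (t - t₀)))
        (2 * a * Real.exp (2 * a * (t - t₀))) t := by
      have h3 : HasDerivAt (fun t : ℝ => 2 * a * (t - t₀)) (2 * a) t := by
        simpa using ((hasDerivAt_id t).sub_const t₀).const_mul (2 * a)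
      simpa [mul_comm] using h3.exp
    have : HasDerivAt (fun y => (H y - a) * Real.exp (2 * a * (y - t₀))) _ t := h1.mul h2
    convert this using 1
    ring
  have key : AntitoneOn g (Ici t₀) := by
    apply antitoneOn_of_deriv_nonpos (convex_Ici t₀)
    · exact fun t ht => (hgd t ht).continuousAt.continuousWithinAt
    · intro t ht
      rw [interior_Ici] at ht
      exact (hgd t (mem_Ici.mpr (le_of_lt ht))).differentiableAt.differentiableWithinAt
    · intro t ht
      rw [interior_Ici] at ht
      have ht' : t ∈ Ici t₀ := mem_Ici.mpr (le_of_lt ht)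
      rw [(hgd t ht').deriv]
      apply mul_nonpos_of_nonpos_of_nonneg _ (Real.exp_nonneg _)
      have h1 := hH_ineq t ht'
      have h2 := hH_lower t ht'
      nlinarith [sq_nonneg (H t - a)]
  intro t ht
  have hgle : g t ≤ g t₀ := key (self_mem_Ici) ht ht
  have hg0 : g t₀ = H t₀ - a := by simp [hg]
  have hE : Real.exp (2 * a * (t - t₀)) * Real.exp (-2 * a * (t - t₀)) = 1 := by
    rw [← Real.exp_add]; ring_nf; exact Real.exp_zero
  have := mul_le_mul_of_nonneg_right hgle (Real.exp_nonneg (-2 * a * (t - t₀)))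
  rw [hg0] at this
  calc H t - a = g t * Real.exp (-2 * a * (t - t₀)) := by
        rw [hg]; simp only []; rw [mul_assoc, hE, mul_one]
    _ ≤ (H t₀ - a) * Real.exp (-2 * a * (t - t₀)) := this
end

section
/- Consider the Bianchi I Einstein–Vlasov–magnetic system with positive cosmological constant, reduced to its scalar equations (see context). Then H'(t) ≤ −H(t)² + Λ/3 ≤ 0 and H(t) ≥ √(Λ/3) for all t ≥ t₀; in particular H is nonincreasing and remains positive. -/
open Real Set

/-- For the Bianchi I Einstein–Vlasov system with a pure magnetic field and a
positive cosmological constant, the Raychaudhuri equation and the Hamiltonian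
constraint give `H' ≤ -H² + Λ/3 ≤ 0` and `H ≥ √(Λ/3)`: the Hubble scalar is
nonincreasing and stays positive. -/
theorem lambda_system_hubble_monotone
    (Λ t₀ : ℝ) (hΛ : 0 < Λ)
    (H H' s h ρ S : ℝ → ℝ)
    (hH_deriv : ∀ t ∈ Ici t₀, HasDerivAt H (H' t) t)
    (hH'_cont : ContinuousOn H' (Ici t₀))
    (hs_cont : ContinuousOn s (Ici t₀)) (hh_cont : ContinuousOn h (Ici t₀))
    (hρ_cont : ContinuousOn ρ (Ici t₀)) (hS_cont : ContinuousOn S (Ici t₀))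
    (hs_nonneg : ∀ t ∈ Ici t₀, 0 ≤ s t)
    (hρ_nonneg : ∀ t ∈ Ici t₀, 0 ≤ ρ t)
    (hS_bounds : ∀ t ∈ Ici t₀, 0 ≤ S t ∧ S t ≤ ρ t)
    (hray : ∀ t ∈ Ici t₀,
      H' t = -(H t) ^ 2 - s t / 3 - (ρ t + S t + (h t) ^ 2 - 2 * Λ) / 6)
    (hconstraint : ∀ t ∈ Ici t₀,
      ρ t + (h t) ^ 2 / 2 + Λ = 3 * (H t) ^ 2 - s t / 2)
    (hH_init : 0 < H t₀) :
    ∀ t ∈ Ici t₀,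
      H' t ≤ -(H t) ^ 2 + Λ / 3 ∧ -(H t) ^ 2 + Λ / 3 ≤ 0 ∧
        Real.sqrt (Λ / 3) ≤ H t := by
  -- H² ≥ Λ/3 pointwise from the constraint
  have hsq : ∀ t ∈ Ici t₀, Λ / 3 ≤ (H t) ^ 2 := by
    intro t ht
    have hc := hconstraint t ht
    have h1 := hρ_nonneg t ht
    have h2 := hs_nonneg t ht
    have h3 : 0 ≤ (h t) ^ 2 := sq_nonneg _
    nlinarith
  -- H is continuous on Ici t₀
  have hHcont : ContinuousOn H (Ici t₀) := fun t ht =>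
    (hH_deriv t ht).continuousAt.continuousWithinAt
  -- H is positive on Ici t₀ by IVT
  have hHpos : ∀ t ∈ Ici t₀, 0 < H t := by
    intro t ht
    by_contra hle
    push_neg at hle
    have hne : H t ≠ 0 := by
      intro h0
      have := hsq t ht
      rw [h0] at this
      nlinarith
    have hlt : H t < 0 := lt_of_le_of_ne hle hne
    have hsub : Icc t₀ t ⊆ Ici t₀ := Icc_subset_Ici_self
    -- find a zero between t₀ and t
    obtain ⟨c, hc, hc0⟩ : ∃ c ∈ Icc t₀ t, H c = 0 := by
      have : (0 : ℝ) ∈ Icc (H t) (H t₀) := ⟨hle, le_of_lt hH_init⟩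
      have := intermediate_value_Icc' (mem_Ici.mp ht) (hHcont.mono hsub) this
      exact this
    have := hsq c (hsub hc)
    rw [hc0] at this
    nlinarith
  intro t ht
  have hc := hconstraint t ht
  have hr := hray t ht
  have h1 := hρ_nonneg t ht
  have h2 := hs_nonneg t ht
  have h3 : 0 ≤ (h t) ^ 2 := sq_nonneg _
  have h4 := (hS_bounds t ht).1
  refine ⟨by nlinarith, by nlinarith [hsq t ht], ?_⟩
  have : Real.sqrt (Λ / 3) ≤ Real.sqrt ((H t) ^ 2) :=
    Real.sqrt_le_sqrt (hsq t ht)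
  rwa [Real.sqrt_sq (le_of_lt (hHpos t ht))] at this
end

section
/- Consider the Bianchi I Einstein–Vlasov–magnetic system with positive cosmological constant, reduced to its scalar equations (see context). Then there exists a constant C ≥ 0 such that for all t ≥ t₀: 0 ≤ H(t) − √(Λ/3) ≤ C·e^{−2√(Λ/3)·t}; s(t)/H(t)² ≤ C·e^{−2√(Λ/3)·t}; h(t)²/H(t)² ≤ C·e^{−2√(Λ/3)·t}; and the deceleration parameter q(t) = −1 − H'(t)/H(t)² satisfies |q(t) + 1| ≤ C·e^{−2√(Λ/3)·t}. -/
open Real Set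

/-- De Sitter-like late time asymptotics for the Bianchi I Einstein–Vlasov
system with a pure magnetic field and a positive cosmological constant `Λ`:
`H → √(Λ/3)`, the Hubble-normalised shear scalar `s/H²` and magnetic field
squared `h²/H²` decay like `e^{-2√(Λ/3)t}`, and the deceleration parameter
`q = -1 - H'/H²` tends to `-1` at the same rate. -/
theorem lambda_system_de_sitter_asymptotics
    (Λ t₀ : ℝ) (hΛ : 0 < Λ)
    (H H' s h ρ S : ℝ → ℝ)
    (hH_deriv : ∀ t ∈ Ici t₀, HasDerivAt H (H' t) t)
    (hH'_cont : ContinuousOn H' (Ici t₀))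
    (hs_cont : ContinuousOn s (Ici t₀)) (hh_cont : ContinuousOn h (Ici t₀))
    (hρ_cont : ContinuousOn ρ (Ici t₀)) (hS_cont : ContinuousOn S (Ici t₀))
    (hs_nonneg : ∀ t ∈ Ici t₀, 0 ≤ s t)
    (hρ_nonneg : ∀ t ∈ Ici t₀, 0 ≤ ρ t)
    (hS_bounds : ∀ t ∈ Ici t₀, 0 ≤ S t ∧ S t ≤ ρ t)
    (hray : ∀ t ∈ Ici t₀,
      H' t = -(H t) ^ 2 - s t / 3 - (ρ t + S t + (h t) ^ 2 - 2 * Λ) / 6)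
    (hconstraint : ∀ t ∈ Ici t₀,
      ρ t + (h t) ^ 2 / 2 + Λ = 3 * (H t) ^ 2 - s t / 2)
    (hH_init : 0 < H t₀) :
    ∃ C : ℝ, 0 ≤ C ∧ ∀ t ∈ Ici t₀,
      (0 ≤ H t - Real.sqrt (Λ / 3) ∧
        H t - Real.sqrt (Λ / 3) ≤ C * Real.exp (-2 * Real.sqrt (Λ / 3) * t)) ∧
      s t / (H t) ^ 2 ≤ C * Real.exp (-2 * Real.sqrt (Λ / 3) * t) ∧
      (h t) ^ 2 / (H t) ^ 2 ≤ C * Real.exp (-2 * Real.sqrt (Λ / 3) * t) ∧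
      |(-1 - H' t / (H t) ^ 2) + 1| ≤ C * Real.exp (-2 * Real.sqrt (Λ / 3) * t) := by
  set γ : ℝ := Real.sqrt (Λ / 3) with hγdef
  have hγ2 : γ ^ 2 = Λ / 3 := Real.sq_sqrt (by linarith)
  have hγpos : 0 < γ := Real.sqrt_pos.mpr (by linarith)
  have hHcont : ContinuousOn H (Ici t₀) := fun t ht =>
    (hH_deriv t ht).continuousAt.continuousWithinAt
  -- H² ≥ γ²
  have hH2 : ∀ t ∈ Ici t₀, γ ^ 2 ≤ (H t) ^ 2 := by
    intro t ht
    have hc := hconstraint t ht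
    have h1 := hρ_nonneg t ht
    have h2 := hs_nonneg t ht
    have h3 : (0:ℝ) ≤ (h t) ^ 2 := sq_nonneg _
    nlinarith [hγ2]
  -- H ≥ γ
  have hHγ : ∀ t ∈ Ici t₀, γ ≤ H t := by
    intro t ht
    by_contra hlt
    push_neg at hlt
    have hneg : H t ≤ -γ := by nlinarith [hH2 t ht]
    have ht0 : t₀ ≤ t := ht
    have hmem : (0:ℝ) ∈ Icc (H t) (H t₀) := ⟨by linarith, le_of_lt hH_init⟩
    obtain ⟨c, hc, hc0⟩ :=
      intermediate_value_Icc' ht0 (hHcont.mono Icc_subset_Ici_self) hmem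
    have := hH2 c (Icc_subset_Ici_self hc)
    nlinarith
  have hHpos : ∀ t ∈ Ici t₀, 0 < H t := fun t ht => lt_of_lt_of_le hγpos (hHγ t ht)
  -- key form of Raychaudhuri
  have hkey : ∀ t ∈ Ici t₀,
      H' t = -(3/2) * ((H t) ^ 2 - γ ^ 2) - s t / 4 - S t / 6 - (h t) ^ 2 / 12 := by
    intro t ht
    have h1 := hray t ht
    have h2 := hconstraint t ht
    rw [hγ2]; linarith
  -- matter bounds
  have hsb : ∀ t ∈ Ici t₀, s t ≤ 6 * ((H t) ^ 2 - γ ^ 2) := by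
    intro t ht
    have hc := hconstraint t ht
    have h1 := hρ_nonneg t ht
    have h3 : (0:ℝ) ≤ (h t) ^ 2 := sq_nonneg _
    rw [hγ2]; linarith
  have hhb : ∀ t ∈ Ici t₀, (h t) ^ 2 ≤ 6 * ((H t) ^ 2 - γ ^ 2) := by
    intro t ht
    have hc := hconstraint t ht
    have h1 := hρ_nonneg t ht
    have h2 := hs_nonneg t ht
    rw [hγ2]; linarith
  have hρb : ∀ t ∈ Ici t₀, ρ t ≤ 3 * ((H t) ^ 2 - γ ^ 2) := by
    intro t ht
    have hc := hconstraint t ht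
    have h2 := hs_nonneg t ht
    have h3 : (0:ℝ) ≤ (h t) ^ 2 := sq_nonneg _
    rw [hγ2]; linarith
  -- derivative bounds
  have hH'le : ∀ t ∈ Ici t₀, H' t ≤ -(3/2) * ((H t) ^ 2 - γ ^ 2) := by
    intro t ht
    have := hkey t ht
    have h1 := hs_nonneg t ht
    have h2 := (hS_bounds t ht).1
    have h3 : (0:ℝ) ≤ (h t) ^ 2 := sq_nonneg _
    linarith
  have hH'ge : ∀ t ∈ Ici t₀, -(4 * ((H t) ^ 2 - γ ^ 2)) ≤ H' t := by
    intro t ht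
    have hk := hkey t ht
    have h1 := hsb t ht
    have h2 := hhb t ht
    have h3 := (hS_bounds t ht).2
    have h4 := hρb t ht
    linarith
  -- Grönwall via monotonicity of g t = (H t - γ) * exp (2γt)
  set g : ℝ → ℝ := fun t => (H t - γ) * Real.exp (2 * γ * t) with hgdef
  have hg_deriv : ∀ t ∈ Ici t₀, HasDerivAt g
      (H' t * Real.exp (2 * γ * t) + (H t - γ) * (2 * γ * Real.exp (2 * γ * t))) t := by
    intro t ht
    have h1 : HasDerivAt (fun t : ℝ => 2 * γ * t) (2 * γ) t := by
      simpa using (hasDerivAt_id t).const_mul (2 * γ)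
    have h2 := h1.exp
    have := ((hH_deriv t ht).sub_const γ).mul h2
    exact this.congr_deriv (by ring)
  have hanti : AntitoneOn g (Ici t₀) := by
    apply antitoneOn_of_deriv_nonpos (convex_Ici t₀)
    · exact fun t ht => (hg_deriv t ht).continuousAt.continuousWithinAt
    · intro t ht
      rw [interior_Ici] at ht
      exact (hg_deriv t (mem_Ici.mpr (le_of_lt (mem_Ioi.mp ht)))).differentiableAt.differentiableWithinAt
    · intro t ht
      rw [interior_Ici] at ht
      have ht' : t ∈ Ici t₀ := mem_Ici.mpr (le_of_lt (mem_Ioi.mp ht))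
      rw [(hg_deriv t ht').deriv]
      have hE : (0:ℝ) < Real.exp (2 * γ * t) := Real.exp_pos _
      have hu : 0 ≤ H t - γ := by linarith [hHγ t ht']
      have hsum : H' t + 2 * γ * (H t - γ) ≤ 0 := by
        have := hH'le t ht'
        nlinarith [sq_nonneg (H t - γ)]
      have : (H' t + 2 * γ * (H t - γ)) * Real.exp (2 * γ * t) ≤ 0 :=
        mul_nonpos_of_nonpos_of_nonneg hsum hE.le
      nlinarith [this]
  set C₁ : ℝ := (H t₀ - γ) * Real.exp (2 * γ * t₀) with hC₁def
  have hC₁0 : 0 ≤ C₁ := by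
    have := hHγ t₀ (self_mem_Ici)
    exact mul_nonneg (by linarith) (Real.exp_pos _).le
  -- the decay estimate for H - γ
  have hu : ∀ t ∈ Ici t₀, H t - γ ≤ C₁ * Real.exp (-2 * γ * t) := by
    intro t ht
    have h1 : g t ≤ g t₀ := hanti self_mem_Ici ht ht
    have hE : (0:ℝ) < Real.exp (-2 * γ * t) := Real.exp_pos _
    have he : Real.exp (2 * γ * t) * Real.exp (-2 * γ * t) = 1 := by
      rw [← Real.exp_add]; norm_num
    have h2 := mul_le_mul_of_nonneg_right h1 hE.le
    calc H t - γ = (H t - γ) * (Real.exp (2 * γ * t) * Real.exp (-2 * γ * t)) := by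
          rw [he, mul_one]
      _ = g t * Real.exp (-2 * γ * t) := by rw [hgdef]; ring
      _ ≤ g t₀ * Real.exp (-2 * γ * t) := h2
      _ = C₁ * Real.exp (-2 * γ * t) := rfl
  refine ⟨C₁ * (1 + 12 / γ), by positivity, ?_⟩
  intro t ht
  have hE : (0:ℝ) < Real.exp (-2 * γ * t) := Real.exp_pos _
  have hHt : γ ≤ H t := hHγ t ht
  have hHt0 : 0 < H t := hHpos t ht
  have hut : H t - γ ≤ C₁ * Real.exp (-2 * γ * t) := hu t ht
  have hu0 : 0 ≤ H t - γ := by linarith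
  have hH2t : (0:ℝ) < (H t) ^ 2 := by positivity
  -- generic: X ≤ 12 (H-γ) H implies X / H² ≤ C exp
  have main : ∀ X : ℝ, X ≤ 12 * (H t - γ) * H t →
      X / (H t) ^ 2 ≤ C₁ * (1 + 12 / γ) * Real.exp (-2 * γ * t) := by
    intro X hX
    rw [div_le_iff₀ hH2t]
    have hK : γ * (12 / γ) = 12 := by field_simp
    have step2 : (H t - γ) * H t ≤ (C₁ * Real.exp (-2 * γ * t)) * H t :=
      mul_le_mul_of_nonneg_right hut hHt0.le
    have step3 : γ * ((C₁ * Real.exp (-2 * γ * t)) * H t)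
        ≤ (C₁ * Real.exp (-2 * γ * t)) * (H t) ^ 2 := by
      have : (C₁ * Real.exp (-2 * γ * t)) * (γ * H t)
          ≤ (C₁ * Real.exp (-2 * γ * t)) * (H t * H t) :=
        mul_le_mul_of_nonneg_left (mul_le_mul_of_nonneg_right hHt hHt0.le)
          (by positivity)
      nlinarith [this]
    have h12 : 12 * ((C₁ * Real.exp (-2 * γ * t)) * H t)
        ≤ (12 / γ) * ((C₁ * Real.exp (-2 * γ * t)) * (H t) ^ 2) := by
      have := mul_le_mul_of_nonneg_left step3 (by positivity : (0:ℝ) ≤ 12 / γ)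
      calc 12 * ((C₁ * Real.exp (-2 * γ * t)) * H t)
          = (12 / γ) * (γ * ((C₁ * Real.exp (-2 * γ * t)) * H t)) := by
            field_simp
        _ ≤ (12 / γ) * ((C₁ * Real.exp (-2 * γ * t)) * (H t) ^ 2) := this
    have hCE2 : 0 ≤ C₁ * Real.exp (-2 * γ * t) * (H t) ^ 2 := by positivity
    nlinarith [mul_le_mul_of_nonneg_right step2 (by norm_num : (0:ℝ) ≤ 12)]
  constructor
  · refine ⟨hu0, ?_⟩
    have : C₁ * Real.exp (-2 * γ * t) ≤ C₁ * (1 + 12 / γ) * Real.exp (-2 * γ * t) := by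
      have h12 : (0:ℝ) ≤ 12 / γ := by positivity
      nlinarith [mul_nonneg hC₁0 hE.le]
    linarith
  refine ⟨?_, ?_, ?_⟩
  · apply main
    have := hsb t ht
    nlinarith [sq_nonneg (H t - γ)]
  · apply main
    have := hhb t ht
    nlinarith [sq_nonneg (H t - γ)]
  · have hH'0 : H' t ≤ 0 := by nlinarith [hH'le t ht, hH2 t ht]
    have habs : |(-1 - H' t / (H t) ^ 2) + 1| = (- H' t) / (H t) ^ 2 := by
      have : (-1 - H' t / (H t) ^ 2) + 1 = (- H' t) / (H t) ^ 2 := by ring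
      rw [this, abs_of_nonneg (div_nonneg (by linarith) hH2t.le)]
    rw [habs]
    apply main
    have h4 := hH'ge t ht
    have h5 : 12 * (H t - γ) * H t - 4 * ((H t) ^ 2 - γ ^ 2)
        = 4 * (2 * H t - γ) * (H t - γ) := by ring
    have h6 : 0 ≤ 4 * (2 * H t - γ) * (H t - γ) :=
      mul_nonneg (mul_nonneg (by norm_num) (by linarith)) hu0
    linarith
end
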